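/- Let a ≥ 1 and k, ℓ ≥ 0 be integers, let β be a composition, and set n = a + 1 + |β| + ℓ. Let A be the set of ∘-decorated Dyck paths (D,S) of size n with α^Rise(D,S) = (a+1, β), peak_∘(D,S) = k, rise_∘(D,S) = ℓ, and 1 ∉ S, and let B be the set of ∘-decorated Dyck paths (D',S') of size n − 1 with peak_∘(D',S') = k, rise_∘(D',S') = ℓ, and α^Rise(D',S') = (β, γ) for some composition γ ⊨ a. Then there exists a bijection Φ : A → B such that for every (D,S) ∈ A, dinv_∘(D,S) = dinv_∘(Φ(D,S)) + ℓ(β) and area_∘(D,S) = area_∘(Φ(D,S)) + a. -/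

import Mathlib

open Finset

namespace DeltaCat

/-- `i`-th entry (0-indexed) of an area sequence, defaulting to `0`. -/
def ent (l : List ℕ) (i : ℕ) : ℕ := l.getD i 0

/-- `l` is the area sequence of a Dyck path (of size `l.length ≥ 1`): it is nonempty,
starts with `0`, and consecutive entries increase by at most one. -/
def IsDyck (l : List ℕ) : Prop :=
  l ≠ [] ∧ ent l 0 = 0 ∧ ∀ i < l.length, i + 1 < l.length → ent l (i + 1) ≤ ent l i + 1

instance (l : List ℕ) : Decidable (IsDyck l) := by unfold IsDyck; infer_instance

/-- the area of a Dyck path -/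
def area (l : List ℕ) : ℕ := l.sum

/-- the diagonal inversions of a Dyck path: pairs `(i,j)`, `i < j`, with
`a_i = a_j` or `a_i = a_j + 1` (0-indexed rows). -/
def dinvPairs (l : List ℕ) : Finset (ℕ × ℕ) :=
  (Finset.range l.length ×ˢ Finset.range l.length).filter
    (fun p => p.1 < p.2 ∧ (ent l p.1 = ent l p.2 ∨ ent l p.1 = ent l p.2 + 1))

/-- the number of diagonal inversions -/
def dinv (l : List ℕ) : ℕ := (dinvPairs l).card

/-- `b'(k) = #{j > k : a_j = a_k} + #{j < k : a_j = a_k + 1}` (0-indexed rows). -/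
def bval (l : List ℕ) (k : ℕ) : ℕ :=
  ((Finset.range l.length).filter (fun j => k < j ∧ ent l j = ent l k)).card +
  ((Finset.range l.length).filter (fun j => j < k ∧ ent l j = ent l k + 1)).card

/-- row `i` (0-indexed) is a double rise -/
def IsRise (l : List ℕ) (i : ℕ) : Prop := i + 1 < l.length ∧ ent l (i + 1) = ent l i + 1

instance (l : List ℕ) (i : ℕ) : Decidable (IsRise l i) := by unfold IsRise; infer_instance

/-- row `i` (0-indexed) is a peak -/
def IsPeak (l : List ℕ) (i : ℕ) : Prop := i < l.length ∧ ¬ IsRise l i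

instance (l : List ℕ) (i : ℕ) : Decidable (IsPeak l i) := by unfold IsPeak; infer_instance

/-- `Rise_∘(D,S)`: the decorated rows which are double rises -/
def riseSet (l : List ℕ) (S : Finset ℕ) : Finset ℕ := S.filter (fun i => IsRise l i)

/-- `Peak_∘(D,S)`: the decorated rows which are peaks -/
def peakSet (l : List ℕ) (S : Finset ℕ) : Finset ℕ := S.filter (fun i => IsPeak l i)

/-- `area_∘(D,S)` -/
def areaC (l : List ℕ) (S : Finset ℕ) : ℕ := area l - ∑ i ∈ riseSet l S, ent l (i + 1)

/-- `dinv_∘(D,S)` -/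
def dinvC (l : List ℕ) (S : Finset ℕ) : ℕ := dinv l - ∑ i ∈ peakSet l S, bval l i

/-- the largest row index (0-indexed) attaining the maximal area value -/
def lastMaxRow (l : List ℕ) : ℕ :=
  ((Finset.range l.length).filter
    (fun i => ∀ j ∈ Finset.range l.length, ent l j ≤ ent l i)).sup id

/-- `S` is a valid set of ∘-decorations on the rows of `l` : a set of rows not containing
the largest index attaining the maximal area value. -/
def ValidDec (l : List ℕ) (S : Finset ℕ) : Prop :=
  (∀ i ∈ S, i < l.length) ∧ lastMaxRow l ∉ S

instance (l : List ℕ) (S : Finset ℕ) : Decidable (ValidDec l S) := by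
  unfold ValidDec; infer_instance

/-- the (0-indexed) rows where the path touches the diagonal, i.e. the starts of segments -/
def segStarts (l : List ℕ) : List ℕ :=
  (List.range l.length).filter (fun i => ent l i == 0)

/-- the touch composition of a Dyck path: the list of lengths of the maximal segments -/
def touchComp (l : List ℕ) : List ℕ :=
  List.zipWith (fun cur next => next - cur) (segStarts l) ((segStarts l).drop 1 ++ [l.length])

/-- the rise-touch composition `α^Rise(D,S)`: the touch composition with the number of
decorated double rises in each segment subtracted from the corresponding part. -/
def riseTouch (l : List ℕ) (S : Finset ℕ) : List ℕ :=
  List.zipWith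
    (fun cur next => (next - cur) - ((riseSet l S).filter (fun i => cur ≤ i ∧ i < next)).card)
    (segStarts l) ((segStarts l).drop 1 ++ [l.length])

/-- all lists of length `n` with entries at most `n`; this contains every Dyck path
area sequence of size `n`. -/
def allSeqs (n : ℕ) : Finset (List ℕ) :=
  (Finset.univ : Finset (Fin n → Fin (n + 1))).image fun v => (List.ofFn v).map Fin.val

/-- the Finset of all Dyck paths of size `n` (encoded by their area sequences) -/
def dyckPaths (n : ℕ) : Finset (List ℕ) := (allSeqs n).filter IsDyck

/-- the Finset of all ∘-decorated Dyck paths of size `n` -/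
def decPaths (n : ℕ) : Finset (List ℕ × Finset ℕ) :=
  ((allSeqs n) ×ˢ (Finset.range n).powerset).filter fun p => IsDyck p.1 ∧ ValidDec p.1 p.2

/-- `Cat^Rise_{α,k,ℓ}(q,t)`, the generating function of ∘-decorated Dyck paths of size
`|α| + ℓ` with `k` decorated peaks, `ℓ` decorated double rises and rise-touch composition
`α`, by the statistics `dinv_∘` and `area_∘`; it is `0` when `k < 0` or `ℓ < 0`. -/
def CatRise {R : Type*} [CommRing R] (q t : R) (α : List ℕ) (k ℓ : ℤ) : R :=
  if 0 ≤ k ∧ 0 ≤ ℓ then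
    ∑ p ∈ (decPaths (α.sum + ℓ.toNat)).filter
        (fun p => (peakSet p.1 p.2).card = k.toNat ∧ (riseSet p.1 p.2).card = ℓ.toNat ∧
          riseTouch p.1 p.2 = α),
      q ^ dinvC p.1 p.2 * t ^ areaC p.1 p.2
  else 0

end DeltaCat

open DeltaCat

set_option linter.unusedSectionVars false

lemma ent_eq_getElem (l : List ℕ) (i : ℕ) (h : i < l.length) : ent l i = l[i] := by
  simp [ent, List.getD, List.getElem?_eq_getElem h]

lemma ent_append_left (x y : List ℕ) (i : ℕ) (h : i < x.length) :
    ent (x ++ y) i = ent x i := by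
  simp [ent, List.getD, List.getElem?_append_left h]

lemma ent_append_right (x y : List ℕ) (j : ℕ) :
    ent (x ++ y) (x.length + j) = ent y j := by
  simp [ent, List.getD, List.getElem?_append_right (Nat.le_add_right x.length j)]

lemma ent_append_right' (x y : List ℕ) (i : ℕ) (h : x.length ≤ i) :
    ent (x ++ y) i = ent y (i - x.length) := by
  simp [ent, List.getD, List.getElem?_append_right h]

lemma ent_tail_map (u : List ℕ) (j : ℕ) (h : j + 1 < u.length) :
    ent (u.tail.map (· - 1)) j = ent u (j + 1) - 1 := by
  rw [ent_eq_getElem _ j (by simp [List.length_tail]; omega), ent_eq_getElem _ _ h]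
  simp [List.getElem_tail]

lemma ent_nil (i : ℕ) : ent [] i = 0 := by simp [ent]

lemma ent_ge_len (l : List ℕ) (i : ℕ) (h : l.length ≤ i) : ent l i = 0 := by
  simp [ent, List.getD, List.getElem?_eq_none h]

lemma ent_cons_succ (a : ℕ) (l : List ℕ) (i : ℕ) : ent (a :: l) (i+1) = ent l i := by
  simp [ent, List.getD]

lemma ent_map_add_one (w : List ℕ) (j : ℕ) (h : j < w.length) :
    ent (w.map (· + 1)) j = ent w j + 1 := by
  rw [ent_eq_getElem _ j (by simpa using h), ent_eq_getElem _ j h]; simp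

def rot (u v : List ℕ) : List ℕ := v ++ (u.tail.map (· - 1))
def rphi (u v : List ℕ) (i : ℕ) : ℕ := if i < u.length then i + v.length - 1 else i - u.length
def rpsi (u v : List ℕ) (j : ℕ) : ℕ := if j < v.length then j + u.length else j - v.length + 1

structure Hyp (u v : List ℕ) : Prop where
  hu0 : ent u 0 = 0
  hu2 : 2 ≤ u.length
  hupos : ∀ i, 1 ≤ i → i < u.length → 1 ≤ ent u i
  hv0 : v = [] ∨ ent v 0 = 0
  hd : IsDyck (u ++ v)

namespace Hyp
variable {u v : List ℕ} (h : Hyp u v)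
include h

lemma hstep : ∀ i, i + 1 < (u ++ v).length → ent (u ++ v) (i+1) ≤ ent (u ++ v) i + 1 :=
  fun i hi => h.hd.2.2 i (by omega) hi

lemma l0 : ent (u ++ v) 0 = 0 := h.hd.2.1

lemma lpos : ∀ i, 1 ≤ i → i < u.length → 1 ≤ ent (u ++ v) i := by
  intro i h1 h2; rw [ent_append_left _ _ _ h2]; exact h.hupos i h1 h2

lemma hu1 : ent u 1 = 1 := by
  have hu2 := h.hu2
  have h1 := h.hstep 0 (by simp; omega)
  norm_num [h.l0] at h1
  rw [ent_append_left _ _ _ (by omega)] at h1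
  have := h.hupos 1 le_rfl (by omega)
  omega

lemma rot_len : (rot u v).length = u.length + v.length - 1 := by
  have := h.hu2; simp [rot]; omega

omit h in lemma ent_rot_v {j : ℕ} (hj : j < v.length) :
    ent (rot u v) j = ent (u ++ v) (u.length + j) := by
  rw [rot, ent_append_left _ _ _ hj, ent_append_right]

omit h in lemma ent_rot_w {i : ℕ} (h1 : 1 ≤ i) (h2 : i < u.length) :
    ent (rot u v) (v.length + i - 1) = ent (u ++ v) i - 1 := by
  have e : v.length + i - 1 = v.length + (i - 1) := by omega
  rw [rot, e, ent_append_right, ent_tail_map _ _ (by omega), ent_append_left _ _ _ h2]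
  congr 2; omega

lemma phi_lt {i : ℕ} (h1 : 1 ≤ i) (h2 : i < u.length + v.length) :
    rphi u v i < u.length + v.length - 1 := by
  have := h.hu2; unfold rphi; split <;> omega

lemma psi_range {j : ℕ} (hj : j < u.length + v.length - 1) :
    1 ≤ rpsi u v j ∧ rpsi u v j < u.length + v.length := by
  have := h.hu2; unfold rpsi; split <;> omega

lemma psi_phi {i : ℕ} (h1 : 1 ≤ i) (h2 : i < u.length + v.length) :
    rpsi u v (rphi u v i) = i := by
  have := h.hu2; unfold rphi rpsi; split <;> split <;> omega

lemma phi_psi {j : ℕ} (hj : j < u.length + v.length - 1) :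
    rphi u v (rpsi u v j) = j := by
  have := h.hu2; unfold rphi rpsi; split <;> split <;> omega

lemma phi_inj {i i' : ℕ} (h1 : 1 ≤ i) (h2 : i < u.length + v.length)
    (h1' : 1 ≤ i') (h2' : i' < u.length + v.length)
    (he : rphi u v i = rphi u v i') : i = i' := by
  have := h.psi_phi h1 h2; have := h.psi_phi h1' h2'; rw [he] at *; omega

lemma ent_phi_lo {i : ℕ} (h1 : 1 ≤ i) (h2 : i < u.length) :
    ent (rot u v) (rphi u v i) = ent (u ++ v) i - 1 := by
  rw [rphi, if_pos h2, show i + v.length - 1 = v.length + i - 1 by omega]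
  exact ent_rot_w h1 h2

lemma ent_phi_hi {i : ℕ} (h1 : u.length ≤ i) (h2 : i < u.length + v.length) :
    ent (rot u v) (rphi u v i) = ent (u ++ v) i := by
  have hj : i - u.length < v.length := by omega
  rw [rphi, if_neg (by omega), ent_rot_v (u := u) hj]
  congr 1; omega

lemma rot_ne : rot u v ≠ [] := by
  have h1 := h.rot_len; have := h.hu2
  intro e; rw [e] at h1; simp at h1; omega

lemma rot0 : ent (rot u v) 0 = 0 := by
  by_cases hv : v = []
  · subst hv
    have h1 := ent_rot_w (u:=u) (v:=([]:List ℕ)) (i:=1) le_rfl (by have := h.hu2; omega)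
    simpa [h.hu1] using h1
  · rcases h.hv0 with h' | h'
    · exact absurd h' hv
    · have hp : 0 < v.length := List.length_pos_iff.mpr hv
      rw [rot, ent_append_left _ _ _ hp, h']

lemma rot_dyck : IsDyck (rot u v) := by
  have hu2 := h.hu2
  have hlen := h.rot_len
  refine ⟨h.rot_ne, h.rot0, ?_⟩
  intro j hj hj1
  rw [hlen] at hj1
  by_cases hcase : j + 1 < v.length
  · rw [ent_rot_v (u:=u) hcase, ent_rot_v (u:=u) (j := j) (by omega)]
    have hs := h.hstep (u.length + j) (by simp; omega)
    rw [show u.length + j + 1 = u.length + (j+1) by ring] at hs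
    exact hs
  · have e1 : ent (rot u v) (j+1) = ent (u++v) (j+2-v.length) - 1 := by
      have hw := ent_rot_w (u:=u) (v:=v) (i := j+2-v.length) (by omega) (by omega)
      rw [show v.length + (j+2-v.length) - 1 = j+1 by omega] at hw
      exact hw
    rw [e1]
    by_cases hc2 : j < v.length
    · rw [show j + 2 - v.length = 1 by omega,
        ent_append_left _ _ _ (by omega), h.hu1]
      omega
    · have e0 : ent (rot u v) j = ent (u++v) (j+1-v.length) - 1 := by
        have hw := ent_rot_w (u:=u) (v:=v) (i := j+1-v.length) (by omega) (by omega)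
        rw [show v.length + (j+1-v.length) - 1 = j by omega] at hw
        exact hw
      rw [e0]
      have hs := h.hstep (j+1-v.length) (by simp; omega)
      rw [show j+1-v.length+1 = j+2-v.length by omega] at hs
      have hp := h.lpos (j+1-v.length) (by omega) (by omega)
      omega

end Hyp

lemma dyck_ent_le {l : List ℕ} (hd : IsDyck l) : ∀ i, ent l i ≤ i := by
  intro i; induction i with
  | zero => rw [hd.2.1]
  | succ i ih =>
    by_cases hi : i + 1 < l.length
    · have := hd.2.2 i (by omega) hi; omega
    · rw [ent_ge_len _ _ (by omega)]; omega

lemma length_of_mem_allSeqs {n : ℕ} {l : List ℕ} (hl : l ∈ allSeqs n) : l.length = n := by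
  simp only [allSeqs, Finset.mem_image] at hl
  obtain ⟨w, -, hw⟩ := hl
  rw [← hw]; simp

lemma mem_allSeqs_of {n : ℕ} {l : List ℕ} (h1 : l.length = n)
    (h2 : ∀ i, i < n → ent l i ≤ n) : l ∈ allSeqs n := by
  simp only [allSeqs, Finset.mem_image]
  refine ⟨fun i => ⟨l[i.val]'(by omega), ?_⟩, Finset.mem_univ _, ?_⟩
  · have h3 := h2 i.val (by omega)
    rw [ent_eq_getElem _ _ (by omega)] at h3; omega
  · apply List.ext_getElem (by simp [h1])
    intro i hi1 hi2
    simp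

lemma mem_allSeqs_of_dyck {n : ℕ} {l : List ℕ} (hd : IsDyck l) (h1 : l.length = n) :
    l ∈ allSeqs n := by
  refine mem_allSeqs_of h1 (fun i hi => ?_)
  have := dyck_ent_le hd i; omega


namespace Hyp
variable {u v : List ℕ} (h : Hyp u v)
include h

lemma rise_iff {i : ℕ} (h1 : 1 ≤ i) (h2 : i < u.length + v.length) :
    IsRise (u ++ v) i ↔ IsRise (rot u v) (rphi u v i) := by
  have hu2 := h.hu2
  have hlen := h.rot_len
  have hlapp : (u ++ v).length = u.length + v.length := by simp
  by_cases hA : i < u.length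
  · by_cases hA1 : i + 1 < u.length
    · have hphi : rphi u v i = i + v.length - 1 := by unfold rphi; rw [if_pos hA]
      have hphi2 : rphi u v (i+1) = (i+1) + v.length - 1 := by unfold rphi; rw [if_pos hA1]
      have e1 := h.ent_phi_lo h1 hA
      have e2 := h.ent_phi_lo (i := i+1) (by omega) hA1
      rw [hphi] at e1; rw [hphi2] at e2
      have hidx : i + v.length - 1 + 1 = (i+1) + v.length - 1 := by omega
      have p1 := h.lpos i h1 hA
      have p2 := h.lpos (i+1) (by omega) hA1
      simp only [IsRise, hphi, hlen, hlapp, hidx]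
      rw [e1, e2]
      omega
    · have hB : i + 1 = u.length := by omega
      have hphi : rphi u v i = i + v.length - 1 := by unfold rphi; rw [if_pos hA]
      constructor
      · rintro ⟨hc, hval⟩
        exfalso
        rw [hlapp] at hc
        have hvne : v ≠ [] := by intro e; subst e; simp at hc; omega
        rcases h.hv0 with h' | h'
        · exact hvne h'
        · have hz : ent (u++v) (i+1) = 0 := by
            rw [hB, show u.length = u.length + 0 by ring, ent_append_right]; exact h'
          have p1 := h.lpos i h1 hA
          omega
      · rintro ⟨hc, -⟩
        exfalso
        rw [hlen, hphi] at hc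
        omega
  · by_cases hC : i + 1 < u.length + v.length
    · have e1 := h.ent_phi_hi (by omega) h2
      have e2 := h.ent_phi_hi (i := i+1) (by omega) hC
      have hphi : rphi u v i = i - u.length := by unfold rphi; rw [if_neg hA]
      have hphi2 : rphi u v (i+1) = (i+1) - u.length := by unfold rphi; rw [if_neg (by omega)]
      rw [hphi] at e1; rw [hphi2] at e2
      have hidx : i - u.length + 1 = (i+1) - u.length := by omega
      simp only [IsRise, hphi, hlen, hlapp, hidx]
      rw [e1, e2]
      omega
    · constructor
      · rintro ⟨hc, -⟩; rw [hlapp] at hc; omega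
      · rintro ⟨hc, hval⟩
        exfalso
        have hphi : rphi u v i = i - u.length := by unfold rphi; rw [if_neg hA]
        have hvpos : 1 ≤ v.length := by omega
        have e0 : ent (rot u v) (i - u.length + 1) = 0 := by
          have hw := ent_rot_w (u:=u) (v:=v) (i := 1) le_rfl (by omega)
          rw [show v.length + 1 - 1 = v.length by omega] at hw
          rw [show i - u.length + 1 = v.length by omega, hw,
            ent_append_left _ _ _ (by omega), h.hu1]
        rw [hphi, e0] at hval
        omega

lemma peak_iff {i : ℕ} (h1 : 1 ≤ i) (h2 : i < u.length + v.length) :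
    IsPeak (u ++ v) i ↔ IsPeak (rot u v) (rphi u v i) := by
  unfold IsPeak
  constructor
  · rintro ⟨-, hr⟩
    exact ⟨by rw [h.rot_len]; exact h.phi_lt h1 h2, fun hr2 => hr ((h.rise_iff h1 h2).mpr hr2)⟩
  · rintro ⟨-, hr⟩
    exact ⟨by simp; omega, fun hr2 => hr ((h.rise_iff h1 h2).mp hr2)⟩

lemma riseSet_rot (S : Finset ℕ) (hS : ∀ s ∈ S, 1 ≤ s ∧ s < u.length + v.length) :
    riseSet (rot u v) (S.image (rphi u v)) = (riseSet (u++v) S).image (rphi u v) := by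
  ext j
  simp only [riseSet, Finset.mem_filter, Finset.mem_image]
  constructor
  · rintro ⟨⟨s, hs, rfl⟩, hr⟩
    exact ⟨s, ⟨hs, (h.rise_iff (hS s hs).1 (hS s hs).2).mpr hr⟩, rfl⟩
  · rintro ⟨s, ⟨hs, hr⟩, rfl⟩
    exact ⟨⟨s, hs, rfl⟩, (h.rise_iff (hS s hs).1 (hS s hs).2).mp hr⟩

lemma peakSet_rot (S : Finset ℕ) (hS : ∀ s ∈ S, 1 ≤ s ∧ s < u.length + v.length) :
    peakSet (rot u v) (S.image (rphi u v)) = (peakSet (u++v) S).image (rphi u v) := by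
  ext j
  simp only [peakSet, Finset.mem_filter, Finset.mem_image]
  constructor
  · rintro ⟨⟨s, hs, rfl⟩, hr⟩
    exact ⟨s, ⟨hs, (h.peak_iff (hS s hs).1 (hS s hs).2).mpr hr⟩, rfl⟩
  · rintro ⟨s, ⟨hs, hr⟩, rfl⟩
    exact ⟨⟨s, hs, rfl⟩, (h.peak_iff (hS s hs).1 (hS s hs).2).mp hr⟩

lemma card_image_phi (T : Finset ℕ) (hT : ∀ s ∈ T, 1 ≤ s ∧ s < u.length + v.length) :
    (T.image (rphi u v)).card = T.card :=
  Finset.card_image_of_injOn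
    (fun x hx y hy e => h.phi_inj (hT x hx).1 (hT x hx).2 (hT y hy).1 (hT y hy).2 e)

end Hyp


lemma mem_dinvPairs {l : List ℕ} {p : ℕ × ℕ} :
    p ∈ dinvPairs l ↔ p.1 < p.2 ∧ p.2 < l.length ∧
      (ent l p.1 = ent l p.2 ∨ ent l p.1 = ent l p.2 + 1) := by
  unfold dinvPairs
  simp only [Finset.mem_filter, Finset.mem_product, Finset.mem_range]
  constructor
  · rintro ⟨⟨h1, h2⟩, h3, h4⟩; exact ⟨h3, h2, h4⟩
  · rintro ⟨h1, h2, h3⟩; exact ⟨⟨by omega, h2⟩, h1, h3⟩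

lemma mem_dinvPairs' {l : List ℕ} {p1 p2 : ℕ} :
    (p1, p2) ∈ dinvPairs l ↔ p1 < p2 ∧ p2 < l.length ∧
      (ent l p1 = ent l p2 ∨ ent l p1 = ent l p2 + 1) := mem_dinvPairs

def bset (l : List ℕ) (k : ℕ) : Finset ℕ :=
  (Finset.range l.length).filter
    (fun j => (k < j ∧ ent l j = ent l k) ∨ (j < k ∧ ent l j = ent l k + 1))

lemma bval_eq_card_bset (l : List ℕ) (k : ℕ) : bval l k = (bset l k).card := by
  unfold bval bset
  rw [Finset.filter_or, Finset.card_union_of_disjoint]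
  rw [Finset.disjoint_left]
  rintro j hj1 hj2
  simp only [Finset.mem_filter] at hj1 hj2
  omega

lemma sum_bval_le_dinv (l : List ℕ) (T : Finset ℕ) (hT : ∀ k ∈ T, k < l.length) :
    ∑ k ∈ T, bval l k ≤ dinv l := by
  classical
  simp_rw [bval_eq_card_bset]
  have hinj : ∀ k ∈ T, ((bset l k).image (fun j => (min k j, max k j))).card
      = (bset l k).card := by
    intro k hk
    apply Finset.card_image_of_injOn
    intro x hx y hy he
    simp only [Prod.mk.injEq] at he
    omega
  have hsub : T.biUnion (fun k => (bset l k).image (fun j => (min k j, max k j)))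
      ⊆ dinvPairs l := by
    intro p hp
    simp only [Finset.mem_biUnion, Finset.mem_image] at hp
    obtain ⟨k, hk, j, hj, rfl⟩ := hp
    simp only [bset, Finset.mem_filter, Finset.mem_range] at hj
    have hkl := hT k hk
    obtain ⟨hjl, hc⟩ := hj
    rw [mem_dinvPairs]
    rcases hc with ⟨h1, h2⟩ | ⟨h1, h2⟩
    · rw [min_eq_left (by omega), max_eq_right (by omega)]
      exact ⟨h1, hjl, Or.inl h2.symm⟩
    · rw [min_eq_right (by omega), max_eq_left (by omega)]
      exact ⟨h1, hkl, Or.inr h2⟩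
  have hdisj : ∀ k ∈ T, ∀ k' ∈ T, k ≠ k' →
      Disjoint ((bset l k).image (fun j => (min k j, max k j)))
        ((bset l k').image (fun j => (min k' j, max k' j))) := by
    intro k hk k' hk' hne
    rw [Finset.disjoint_left]
    rintro p hp hp'
    simp only [Finset.mem_image] at hp hp'
    obtain ⟨j, hj, he⟩ := hp
    obtain ⟨j', hj', he'⟩ := hp'
    rw [← he'] at he
    simp only [Prod.mk.injEq] at he
    simp only [bset, Finset.mem_filter, Finset.mem_range] at hj hj'
    obtain ⟨-, hc⟩ := hj
    obtain ⟨-, hc'⟩ := hj'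
    obtain ⟨rfl, rfl⟩ : k = j' ∧ j = k' := by omega
    omega
  calc ∑ k ∈ T, (bset l k).card
      = ∑ k ∈ T, ((bset l k).image (fun j => (min k j, max k j))).card :=
        (Finset.sum_congr rfl hinj).symm
    _ = (T.biUnion (fun k => (bset l k).image (fun j => (min k j, max k j)))).card :=
        (Finset.card_biUnion hdisj).symm
    _ ≤ (dinvPairs l).card := Finset.card_le_card hsub

lemma segStarts_length (l : List ℕ) :
    (segStarts l).length = ((Finset.range l.length).filter (fun i => ent l i = 0)).card := by
  unfold segStarts
  generalize l.length = n
  induction n with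
  | zero => simp
  | succ n ih =>
    rw [List.range_succ, List.filter_append, Finset.range_add_one, Finset.filter_insert]
    by_cases hp : ent l n = 0
    · rw [if_pos hp, Finset.card_insert_of_notMem (by simp), List.length_append, ih]
      simp [hp]
    · rw [if_neg hp, List.length_append, ih]
      simp [hp]

namespace Hyp
variable {u v : List ℕ} (h : Hyp u v)
include h

lemma symrel {i j : ℕ} (h1i : 1 ≤ i) (h2i : i < u.length + v.length) (h1j : 1 ≤ j)
    (h2j : j < u.length + v.length) (hij : i < j) :
    (ent (u++v) i = ent (u++v) j ∨ ent (u++v) i = ent (u++v) j + 1) ↔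
    (ent (rot u v) (min (rphi u v i) (rphi u v j)) =
       ent (rot u v) (max (rphi u v i) (rphi u v j)) ∨
     ent (rot u v) (min (rphi u v i) (rphi u v j)) =
       ent (rot u v) (max (rphi u v i) (rphi u v j)) + 1) := by
  have hu2 := h.hu2
  by_cases hA : i < u.length
  · by_cases hB : j < u.length
    · have e1 := h.ent_phi_lo h1i hA
      have e2 := h.ent_phi_lo h1j hB
      have hm : min (rphi u v i) (rphi u v j) = rphi u v i :=
        min_eq_left (by simp only [rphi, if_pos hA, if_pos hB]; omega)
      have hM : max (rphi u v i) (rphi u v j) = rphi u v j :=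
        max_eq_right (by simp only [rphi, if_pos hA, if_pos hB]; omega)
      rw [hm, hM, e1, e2]
      have p1 := h.lpos i h1i hA
      have p2 := h.lpos j h1j hB
      omega
    · have e1 := h.ent_phi_lo h1i hA
      have e2 := h.ent_phi_hi (by omega) h2j
      have hm : min (rphi u v i) (rphi u v j) = rphi u v j :=
        min_eq_right (by simp only [rphi, if_pos hA, if_neg hB]; omega)
      have hM : max (rphi u v i) (rphi u v j) = rphi u v i :=
        max_eq_left (by simp only [rphi, if_pos hA, if_neg hB]; omega)
      rw [hm, hM, e1, e2]
      have p1 := h.lpos i h1i hA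
      omega
  · have hB : ¬ j < u.length := by omega
    have e1 := h.ent_phi_hi (by omega) h2i
    have e2 := h.ent_phi_hi (by omega) h2j
    have hm : min (rphi u v i) (rphi u v j) = rphi u v i :=
      min_eq_left (by simp only [rphi, if_neg hA, if_neg hB]; omega)
    have hM : max (rphi u v i) (rphi u v j) = rphi u v j :=
      max_eq_right (by simp only [rphi, if_neg hA, if_neg hB]; omega)
    rw [hm, hM, e1, e2]

lemma symrel' {i j : ℕ} (h1i : 1 ≤ i) (h2i : i < u.length + v.length) (h1j : 1 ≤ j)
    (h2j : j < u.length + v.length) (hij : i ≠ j) :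
    (ent (u++v) (min i j) = ent (u++v) (max i j) ∨
       ent (u++v) (min i j) = ent (u++v) (max i j) + 1) ↔
    (ent (rot u v) (min (rphi u v i) (rphi u v j)) =
       ent (rot u v) (max (rphi u v i) (rphi u v j)) ∨
     ent (rot u v) (min (rphi u v i) (rphi u v j)) =
       ent (rot u v) (max (rphi u v i) (rphi u v j)) + 1) := by
  rcases lt_or_gt_of_ne hij with hlt | hlt
  · rw [min_eq_left (le_of_lt hlt), max_eq_right (le_of_lt hlt)]
    exact h.symrel h1i h2i h1j h2j hlt
  · rw [min_eq_right (le_of_lt hlt), max_eq_left (le_of_lt hlt),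
      min_comm (rphi u v i), max_comm (rphi u v i)]
    exact h.symrel h1j h2j h1i h2i hlt

lemma dinv_rot : dinv (u ++ v) =
    dinv (rot u v) + ((Finset.range v.length).filter (fun j => ent v j = 0)).card := by
  classical
  have hu2 := h.hu2
  have hrlen := h.rot_len
  have hn : (u ++ v).length = u.length + v.length := by simp
  have hzero : ((dinvPairs (u++v)).filter (fun p => p.1 = 0)).card
      = ((Finset.range v.length).filter (fun j => ent v j = 0)).card := by
    refine Finset.card_bij' (fun p _ => p.2 - u.length) (fun j _ => (0, u.length + j))
      ?hi ?hj ?li ?ri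
    case hi =>
      rintro ⟨p1, p2⟩ hp
      obtain ⟨hmem, he0⟩ := Finset.mem_filter.mp hp
      obtain ⟨h12, h2n, hrel⟩ := mem_dinvPairs'.mp hmem
      have he0' : p1 = 0 := he0
      subst he0'
      rw [hn] at h2n
      rw [h.l0] at hrel
      have hge : u.length ≤ p2 := by
        by_contra hlt
        have := h.lpos p2 (by omega) (by omega)
        omega
      have he := ent_append_right' u v p2 hge
      show p2 - u.length ∈ Finset.filter (fun j => ent v j = 0) (Finset.range v.length)
      refine Finset.mem_filter.mpr ⟨Finset.mem_range.mpr (by omega), ?_⟩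
      show ent v (p2 - u.length) = 0
      omega
    case hj =>
      rintro j hj
      obtain ⟨hj1, hj2⟩ := Finset.mem_filter.mp hj
      rw [Finset.mem_range] at hj1
      have hj2' : ent v j = 0 := hj2
      have he := ent_append_right u v j
      refine Finset.mem_filter.mpr ⟨mem_dinvPairs'.mpr ⟨by omega, by rw [hn]; omega, ?_⟩, rfl⟩
      rw [h.l0, he]
      omega
    case li =>
      rintro ⟨p1, p2⟩ hp
      obtain ⟨hmem, he0⟩ := Finset.mem_filter.mp hp
      obtain ⟨h12, h2n, hrel⟩ := mem_dinvPairs'.mp hmem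
      have he0' : p1 = 0 := he0
      subst he0'
      rw [hn] at h2n
      rw [h.l0] at hrel
      have hge : u.length ≤ p2 := by
        by_contra hlt
        have := h.lpos p2 (by omega) (by omega)
        omega
      show (0, u.length + (p2 - u.length)) = (0, p2)
      rw [Prod.mk.injEq]
      omega
    case ri =>
      rintro j hj
      show u.length + j - u.length = j
      omega
  have hpos : ((dinvPairs (u++v)).filter (fun p => ¬ p.1 = 0)).card = dinv (rot u v) := by
    rw [dinv]
    refine Finset.card_bij'
      (fun p _ => (min (rphi u v p.1) (rphi u v p.2), max (rphi u v p.1) (rphi u v p.2)))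
      (fun q _ => (min (rpsi u v q.1) (rpsi u v q.2), max (rpsi u v q.1) (rpsi u v q.2)))
      ?hi ?hj ?li ?ri
    case hi =>
      rintro ⟨p1, p2⟩ hp
      obtain ⟨hmem, he0⟩ := Finset.mem_filter.mp hp
      obtain ⟨h12, h2n, hrel⟩ := mem_dinvPairs'.mp hmem
      have he0' : ¬ p1 = 0 := he0
      rw [hn] at h2n
      have h11 : 1 ≤ p1 := by omega
      have hne : rphi u v p1 ≠ rphi u v p2 := by
        intro he
        have := h.phi_inj h11 (by omega) (by omega) (by omega) he
        omega
      have hl1 := h.phi_lt h11 (by omega)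
      have hl2 := h.phi_lt (i := p2) (by omega) (by omega)
      show (min (rphi u v p1) (rphi u v p2), max (rphi u v p1) (rphi u v p2))
        ∈ dinvPairs (rot u v)
      refine mem_dinvPairs'.mpr ⟨by omega, by rw [hrlen]; omega, ?_⟩
      exact (h.symrel h11 (by omega) (by omega) (by omega) h12).mp hrel
    case hj =>
      rintro ⟨q1, q2⟩ hq
      obtain ⟨h12, h2n, hrel⟩ := mem_dinvPairs'.mp hq
      rw [hrlen] at h2n
      obtain ⟨ha1, ha2⟩ := h.psi_range (j := q1) (by omega)
      obtain ⟨hb1, hb2⟩ := h.psi_range (j := q2) (by omega)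
      have hne : rpsi u v q1 ≠ rpsi u v q2 := by
        intro he
        have e1 := h.phi_psi (j := q1) (by omega)
        have e2 := h.phi_psi (j := q2) (by omega)
        rw [he] at e1; omega
      show (min (rpsi u v q1) (rpsi u v q2), max (rpsi u v q1) (rpsi u v q2))
        ∈ (dinvPairs (u++v)).filter (fun p => ¬ p.1 = 0)
      refine Finset.mem_filter.mpr ⟨mem_dinvPairs'.mpr ⟨by omega, by rw [hn]; omega, ?_⟩,
        by show ¬ min (rpsi u v q1) (rpsi u v q2) = 0; omega⟩
      have hs := h.symrel' ha1 ha2 hb1 hb2 hne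
      rw [h.phi_psi (j := q1) (by omega), h.phi_psi (j := q2) (by omega)] at hs
      rw [show min q1 q2 = q1 from min_eq_left (by omega),
        show max q1 q2 = q2 from max_eq_right (by omega)] at hs
      exact hs.mpr hrel
    case li =>
      rintro ⟨p1, p2⟩ hp
      obtain ⟨hmem, he0⟩ := Finset.mem_filter.mp hp
      obtain ⟨h12, h2n, hrel⟩ := mem_dinvPairs'.mp hmem
      have he0' : ¬ p1 = 0 := he0
      rw [hn] at h2n
      have h11 : 1 ≤ p1 := by omega
      show (min (rpsi u v (min (rphi u v p1) (rphi u v p2)))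
              (rpsi u v (max (rphi u v p1) (rphi u v p2))),
            max (rpsi u v (min (rphi u v p1) (rphi u v p2)))
              (rpsi u v (max (rphi u v p1) (rphi u v p2)))) = (p1, p2)
      rcases le_total (rphi u v p1) (rphi u v p2) with hle | hle
      · rw [min_eq_left hle, max_eq_right hle,
          h.psi_phi h11 (by omega), h.psi_phi (i := p2) (by omega) (by omega)]
        rw [Prod.mk.injEq]
        omega
      · rw [min_eq_right hle, max_eq_left hle,
          h.psi_phi h11 (by omega), h.psi_phi (i := p2) (by omega) (by omega)]
        rw [Prod.mk.injEq]
        omega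
    case ri =>
      rintro ⟨q1, q2⟩ hq
      obtain ⟨h12, h2n, hrel⟩ := mem_dinvPairs'.mp hq
      rw [hrlen] at h2n
      show (min (rphi u v (min (rpsi u v q1) (rpsi u v q2)))
              (rphi u v (max (rpsi u v q1) (rpsi u v q2))),
            max (rphi u v (min (rpsi u v q1) (rpsi u v q2)))
              (rphi u v (max (rpsi u v q1) (rpsi u v q2)))) = (q1, q2)
      rcases le_total (rpsi u v q1) (rpsi u v q2) with hle | hle
      · rw [min_eq_left hle, max_eq_right hle,
          h.phi_psi (j := q1) (by omega), h.phi_psi (j := q2) (by omega)]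
        rw [Prod.mk.injEq]
        omega
      · rw [min_eq_right hle, max_eq_left hle,
          h.phi_psi (j := q1) (by omega), h.phi_psi (j := q2) (by omega)]
        rw [Prod.mk.injEq]
        omega
  rw [dinv, ← Finset.card_filter_add_card_filter_not (p := fun p => p.1 = 0),
    hzero, hpos, add_comm]

end Hyp


lemma mem_riseSet {l : List ℕ} {S : Finset ℕ} {i : ℕ} :
    i ∈ riseSet l S ↔ i ∈ S ∧ IsRise l i := Finset.mem_filter

lemma mem_peakSet {l : List ℕ} {S : Finset ℕ} {i : ℕ} :
    i ∈ peakSet l S ↔ i ∈ S ∧ IsPeak l i := Finset.mem_filter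

lemma sum_ent (l : List ℕ) : l.sum = ∑ i ∈ Finset.range l.length, ent l i := by
  induction l with
  | nil => simp
  | cons a t ih =>
    rw [List.sum_cons, List.length_cons, Finset.sum_range_succ', ih]
    have h0 : ent (a :: t) 0 = a := rfl
    have h1 : ∀ i ∈ Finset.range t.length, ent (a :: t) (i+1) = ent t i :=
      fun i _ => ent_cons_succ a t i
    rw [h0, Finset.sum_congr rfl h1]
    exact Nat.add_comm _ _

lemma sum_rise_le (l : List ℕ) (S : Finset ℕ) :
    ∑ i ∈ riseSet l S, ent l (i+1) ≤ area l := by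
  rw [show area l = l.sum from rfl, sum_ent l]
  calc ∑ i ∈ riseSet l S, ent l (i+1)
      = ∑ j ∈ (riseSet l S).image (· + 1), ent l j := by
        rw [Finset.sum_image (fun x _ y _ e => by omega)]
    _ ≤ ∑ i ∈ Finset.range l.length, ent l i := Finset.sum_le_sum_of_subset (by
        intro j hj
        obtain ⟨i, hi, rfl⟩ := Finset.mem_image.mp hj
        rw [Finset.mem_range]
        exact (mem_riseSet.mp hi).2.1)

namespace Hyp
variable {u v : List ℕ} (h : Hyp u v)
include h

lemma brel {j k : ℕ} (h1j : 1 ≤ j) (h2j : j < u.length + v.length) (h1k : 1 ≤ k)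
    (h2k : k < u.length + v.length) :
    ((k < j ∧ ent (u++v) j = ent (u++v) k) ∨
     (j < k ∧ ent (u++v) j = ent (u++v) k + 1)) ↔
    ((rphi u v k < rphi u v j ∧ ent (rot u v) (rphi u v j) = ent (rot u v) (rphi u v k)) ∨
     (rphi u v j < rphi u v k ∧
        ent (rot u v) (rphi u v j) = ent (rot u v) (rphi u v k) + 1)) := by
  have hu2 := h.hu2
  by_cases hA : j < u.length
  · have e1 := h.ent_phi_lo h1j hA
    have p1 := h.lpos j h1j hA
    have hpj : rphi u v j = j + v.length - 1 := by simp only [rphi, if_pos hA]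
    by_cases hB : k < u.length
    · have e2 := h.ent_phi_lo h1k hB
      have p2 := h.lpos k h1k hB
      have hpk : rphi u v k = k + v.length - 1 := by simp only [rphi, if_pos hB]
      rw [e1, e2, hpj, hpk]
      omega
    · have e2 := h.ent_phi_hi (by omega) h2k
      have hpk : rphi u v k = k - u.length := by simp only [rphi, if_neg hB]
      rw [e1, e2, hpj, hpk]
      omega
  · have e1 := h.ent_phi_hi (by omega) h2j
    have hpj : rphi u v j = j - u.length := by simp only [rphi, if_neg hA]
    by_cases hB : k < u.length
    · have e2 := h.ent_phi_lo h1k hB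
      have p2 := h.lpos k h1k hB
      have hpk : rphi u v k = k + v.length - 1 := by simp only [rphi, if_pos hB]
      rw [e1, e2, hpj, hpk]
      omega
    · have e2 := h.ent_phi_hi (by omega) h2k
      have hpk : rphi u v k = k - u.length := by simp only [rphi, if_neg hB]
      rw [e1, e2, hpj, hpk]
      omega

lemma bval_rot {k : ℕ} (h1k : 1 ≤ k) (h2k : k < u.length + v.length) :
    bval (u++v) k = bval (rot u v) (rphi u v k) := by
  have hu2 := h.hu2
  have hn : (u ++ v).length = u.length + v.length := by simp
  rw [bval_eq_card_bset, bval_eq_card_bset]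
  refine Finset.card_bij' (fun j _ => rphi u v j) (fun j _ => rpsi u v j) ?hi ?hj ?li ?ri
  case hi =>
    intro j hj
    obtain ⟨hjr, hc⟩ := Finset.mem_filter.mp hj
    rw [Finset.mem_range, hn] at hjr
    have h1j : 1 ≤ j := by
      rcases hc with ⟨h1, -⟩ | ⟨-, h2⟩
      · omega
      · by_contra h0
        have hj0 : j = 0 := by omega
        subst hj0
        rw [h.l0] at h2
        omega
    refine Finset.mem_filter.mpr ⟨Finset.mem_range.mpr ?_, ?_⟩
    · rw [h.rot_len]; exact h.phi_lt h1j hjr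
    · exact (h.brel h1j hjr h1k h2k).mp hc
  case hj =>
    intro j hj
    obtain ⟨hjr, hc⟩ := Finset.mem_filter.mp hj
    rw [Finset.mem_range, h.rot_len] at hjr
    obtain ⟨ha1, ha2⟩ := h.psi_range hjr
    have hb := h.brel ha1 ha2 h1k h2k
    rw [h.phi_psi hjr] at hb
    have hmem : rpsi u v j ∈ bset (u++v) k :=
      Finset.mem_filter.mpr ⟨Finset.mem_range.mpr (by rw [hn]; omega), hb.mpr hc⟩
    exact hmem
  case li =>
    intro j hj
    obtain ⟨hjr, hc⟩ := Finset.mem_filter.mp hj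
    rw [Finset.mem_range, hn] at hjr
    have h1j : 1 ≤ j := by
      rcases hc with ⟨h1, -⟩ | ⟨-, h2⟩
      · omega
      · by_contra h0
        have hj0 : j = 0 := by omega
        subst hj0
        rw [h.l0] at h2
        omega
    exact h.psi_phi h1j hjr
  case ri =>
    intro j hj
    obtain ⟨hjr, -⟩ := Finset.mem_filter.mp hj
    rw [Finset.mem_range, h.rot_len] at hjr
    exact h.phi_psi hjr

lemma sum_bval_rot (S : Finset ℕ) (hS : ∀ s ∈ S, 1 ≤ s ∧ s < u.length + v.length) :
    ∑ i ∈ peakSet (rot u v) (S.image (rphi u v)), bval (rot u v) i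
      = ∑ i ∈ peakSet (u++v) S, bval (u++v) i := by
  rw [h.peakSet_rot S hS]
  rw [Finset.sum_image (fun x hx y hy e => h.phi_inj (hS x (mem_peakSet.mp hx).1).1
      (hS x (mem_peakSet.mp hx).1).2 (hS y (mem_peakSet.mp hy).1).1
      (hS y (mem_peakSet.mp hy).1).2 e)]
  apply Finset.sum_congr rfl
  intro k hk
  have hk' := hS k (mem_peakSet.mp hk).1
  exact (h.bval_rot hk'.1 hk'.2).symm

lemma dinvC_rot (S : Finset ℕ) (hS : ∀ s ∈ S, 1 ≤ s ∧ s < u.length + v.length) :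
    dinvC (u++v) S = dinvC (rot u v) (S.image (rphi u v)) +
      ((Finset.range v.length).filter (fun j => ent v j = 0)).card := by
  unfold dinvC
  have hd := h.dinv_rot
  have hsum := h.sum_bval_rot S hS
  have hle : ∑ i ∈ peakSet (rot u v) (S.image (rphi u v)), bval (rot u v) i
      ≤ dinv (rot u v) :=
    sum_bval_le_dinv _ _ (fun k hk => (mem_peakSet.mp hk).2.1)
  omega

lemma area_rot : area (u ++ v) = area (rot u v) + (u.length - 1) := by
  have hu2 := h.hu2
  have hlw : (u.tail.map (· - 1)).length = u.length - 1 := by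
    simp [List.length_tail]
  have hA : (u.tail.map (· - 1)).sum
      = ∑ i ∈ Finset.range (u.length - 1), (ent u (i+1) - 1) := by
    rw [sum_ent, hlw]
    exact Finset.sum_congr rfl
      (fun i hi => ent_tail_map u i (by rw [Finset.mem_range] at hi; omega))
  have hB : u.sum = (∑ i ∈ Finset.range (u.length - 1), ent u (i+1)) + 0 := by
    conv_lhs => rw [sum_ent u, show u.length = (u.length - 1) + 1 from by omega]
    rw [Finset.sum_range_succ', h.hu0]
  have hC : ∑ i ∈ Finset.range (u.length - 1), ent u (i+1)
      = (∑ i ∈ Finset.range (u.length - 1), (ent u (i+1) - 1)) + (u.length - 1) := by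
    have h2 : ∀ i ∈ Finset.range (u.length - 1), ent u (i+1) = (ent u (i+1) - 1) + 1 :=
      fun i hi => by
        have := h.hupos (i+1) (by omega) (by rw [Finset.mem_range] at hi; omega)
        omega
    rw [Finset.sum_congr rfl h2, Finset.sum_add_distrib, Finset.sum_const, Finset.card_range,
      smul_eq_mul, mul_one]
  show (u ++ v).sum = (rot u v).sum + (u.length - 1)
  rw [List.sum_append, rot, List.sum_append, hA]
  omega

lemma ent_rise_rot {i : ℕ} (h1 : 1 ≤ i) (h2 : i < u.length + v.length)
    (hr : IsRise (u++v) i) :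
    ent (rot u v) (rphi u v i + 1) + (if i < u.length then 1 else 0) = ent (u++v) (i+1) := by
  have hu2 := h.hu2
  obtain ⟨hi1, hval⟩ := hr
  rw [show (u++v).length = u.length + v.length by simp] at hi1
  by_cases hA : i < u.length
  · have hi1u : i + 1 < u.length := by
      by_contra hc
      have he : i + 1 = u.length := by omega
      by_cases hv : v = []
      · subst hv; simp at hi1; omega
      · have h0 : ent (u++v) (i+1) = 0 := by
          rw [he, show u.length = u.length + 0 by ring, ent_append_right]
          rcases h.hv0 with h' | h'
          · exact absurd h' hv
          · exact h'
        have := h.lpos i h1 hA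
        omega
    have e2 := h.ent_phi_lo (i := i+1) (by omega) hi1u
    have hphi : rphi u v (i+1) = rphi u v i + 1 := by
      simp only [rphi, if_pos hA, if_pos hi1u]; omega
    rw [hphi] at e2
    rw [if_pos hA, e2]
    have := h.lpos (i+1) (by omega) hi1u
    omega
  · have e2 := h.ent_phi_hi (i := i+1) (by omega) (by omega)
    have hphi : rphi u v (i+1) = rphi u v i + 1 := by
      simp only [rphi, if_neg hA, if_neg (show ¬ i + 1 < u.length by omega)]; omega
    rw [hphi] at e2
    rw [if_neg hA, e2]
    omega

lemma sum_rise_rot (S : Finset ℕ) (hS : ∀ s ∈ S, 1 ≤ s ∧ s < u.length + v.length) :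
    ∑ i ∈ riseSet (rot u v) (S.image (rphi u v)), ent (rot u v) (i+1)
      + ((riseSet (u++v) S).filter (fun i => i < u.length)).card
    = ∑ i ∈ riseSet (u++v) S, ent (u++v) (i+1) := by
  have hmem : ∀ i ∈ riseSet (u++v) S, 1 ≤ i ∧ i < u.length + v.length :=
    fun i hi => hS i (mem_riseSet.mp hi).1
  rw [h.riseSet_rot S hS,
    Finset.sum_image (fun x hx y hy e => h.phi_inj (hmem x hx).1 (hmem x hx).2
      (hmem y hy).1 (hmem y hy).2 e)]
  rw [Finset.card_filter, ← Finset.sum_add_distrib]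
  apply Finset.sum_congr rfl
  intro i hi
  exact h.ent_rise_rot (hmem i hi).1 (hmem i hi).2 (mem_riseSet.mp hi).2

lemma areaC_rot (S : Finset ℕ) (hS : ∀ s ∈ S, 1 ≤ s ∧ s < u.length + v.length) :
    areaC (u++v) S = areaC (rot u v) (S.image (rphi u v)) +
      ((u.length - 1) - ((riseSet (u++v) S).filter (fun i => i < u.length)).card) := by
  unfold areaC
  have h1 := h.area_rot
  have h2 := h.sum_rise_rot S hS
  have h3 := sum_rise_le (u++v) S
  have h4 := sum_rise_le (rot u v) (S.image (rphi u v))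
  have hru : ((riseSet (u++v) S).filter (fun i => i < u.length)).card ≤ u.length - 1 := by
    have hsub : (riseSet (u++v) S).filter (fun i => i < u.length) ⊆ Finset.Ico 1 u.length := by
      intro i hi
      obtain ⟨hir, hlt⟩ := Finset.mem_filter.mp hi
      rw [Finset.mem_Ico]
      exact ⟨(hS i (mem_riseSet.mp hir).1).1, hlt⟩
    have := Finset.card_le_card hsub
    rwa [Nat.card_Ico] at this
  omega

end Hyp


lemma lastMaxRow_spec {l : List ℕ} (hl : l ≠ []) :
    lastMaxRow l < l.length ∧ (∀ j < l.length, ent l j ≤ ent l (lastMaxRow l)) ∧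
      (∀ j, lastMaxRow l < j → j < l.length → ent l j < ent l (lastMaxRow l)) := by
  classical
  set s := (Finset.range l.length).filter
    (fun i => ∀ j ∈ Finset.range l.length, ent l j ≤ ent l i) with hs
  have h0 : lastMaxRow l = s.sup id := rfl
  have hne : s.Nonempty := by
    obtain ⟨b, hb, hmax⟩ := Finset.exists_max_image (Finset.range l.length) (ent l)
      (by rw [Finset.nonempty_range_iff]; exact fun e => hl (List.length_eq_zero_iff.mp e))
    exact ⟨b, Finset.mem_filter.mpr ⟨hb, hmax⟩⟩
  have hmem : lastMaxRow l ∈ s := by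
    rw [h0, ← Finset.sup'_eq_sup hne id]
    exact s.max'_mem hne
  obtain ⟨hlt, hmax⟩ := Finset.mem_filter.mp hmem
  refine ⟨Finset.mem_range.mp hlt, fun j hj => hmax j (Finset.mem_range.mpr hj), ?_⟩
  intro j hj1 hj2
  by_contra hc
  have he : ent l j = ent l (lastMaxRow l) :=
    le_antisymm (hmax j (Finset.mem_range.mpr hj2)) (by omega)
  have hjs : j ∈ s := Finset.mem_filter.mpr ⟨Finset.mem_range.mpr hj2,
    fun i hi => by rw [he]; exact hmax i hi⟩
  have hle := Finset.le_sup (f := id) hjs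
  rw [← h0] at hle
  simp only [id] at hle
  omega

lemma lastMaxRow_eq {l : List ℕ} {k : ℕ} (hk : k < l.length)
    (hmax : ∀ j < l.length, ent l j ≤ ent l k)
    (hlast : ∀ j, k < j → j < l.length → ent l j < ent l k) :
    lastMaxRow l = k := by
  have hl : l ≠ [] := by intro e; subst e; simp at hk
  obtain ⟨h1, h2, h3⟩ := lastMaxRow_spec hl
  rcases lt_trichotomy (lastMaxRow l) k with hlt | he | hgt
  · have ha := h3 k hlt hk
    have hb := hmax (lastMaxRow l) h1
    omega
  · exact he
  · have ha := hlast (lastMaxRow l) hgt h1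
    have hb := h2 k hk
    omega

namespace Hyp
variable {u v : List ℕ} (h : Hyp u v)
include h

lemma lmr_rot : lastMaxRow (rot u v) = rphi u v (lastMaxRow (u++v)) := by
  have hu2 := h.hu2
  obtain ⟨hlt, hmax, hlast⟩ := lastMaxRow_spec h.hd.1
  simp only [List.length_append] at hlt hmax hlast
  set m := lastMaxRow (u ++ v) with hm
  have he1 : ent (u++v) 1 = 1 := by
    rw [ent_append_left _ _ _ (by omega)]; exact h.hu1
  have hm1 : 1 ≤ m := by
    by_contra h0
    have hle := hmax 1 (by omega)
    have he0 : ent (u++v) m = 0 := by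
      rw [show m = 0 by omega, h.l0]
    omega
  have hlm1 : 1 ≤ ent (u++v) m := by
    have := hmax 1 (by omega); omega
  apply lastMaxRow_eq
  · rw [h.rot_len]; exact h.phi_lt hm1 hlt
  · intro j hj
    rw [h.rot_len] at hj
    by_cases hB : j < v.length
    · have e_j := ent_rot_v (u := u) hB
      by_cases hM : m < u.length
      · have e_m := h.ent_phi_lo hm1 hM
        have hlasti := hlast (u.length + j) (by omega) (by omega)
        rw [e_j, e_m]
        omega
      · have e_m := h.ent_phi_hi (by omega) hlt
        have hmaxi := hmax (u.length + j) (by omega)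
        rw [e_j, e_m]
        omega
    · have hi1 : 1 ≤ j - v.length + 1 := by omega
      have hi2 : j - v.length + 1 < u.length := by omega
      have e_j := ent_rot_w (v := v) hi1 hi2
      rw [show v.length + (j - v.length + 1) - 1 = j by omega] at e_j
      have hposi := h.lpos _ hi1 hi2
      have hmaxi := hmax (j - v.length + 1) (by omega)
      by_cases hM : m < u.length
      · have e_m := h.ent_phi_lo hm1 hM
        rw [e_j, e_m]; omega
      · have e_m := h.ent_phi_hi (by omega) hlt
        rw [e_j, e_m]; omega
  · intro j hjm hj
    rw [h.rot_len] at hj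
    by_cases hB : j < v.length
    · have e_j := ent_rot_v (u := u) hB
      by_cases hM : m < u.length
      · have hpm : rphi u v m = m + v.length - 1 := by simp only [rphi, if_pos hM]
        rw [hpm] at hjm
        omega
      · have hpm : rphi u v m = m - u.length := by simp only [rphi, if_neg hM]
        rw [hpm] at hjm
        have e_m := h.ent_phi_hi (by omega) hlt
        have hlasti := hlast (u.length + j) (by omega) (by omega)
        rw [e_j, e_m]
        omega
    · have hi1 : 1 ≤ j - v.length + 1 := by omega
      have hi2 : j - v.length + 1 < u.length := by omega
      have e_j := ent_rot_w (v := v) hi1 hi2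
      rw [show v.length + (j - v.length + 1) - 1 = j by omega] at e_j
      have hposi := h.lpos _ hi1 hi2
      by_cases hM : m < u.length
      · have hpm : rphi u v m = m + v.length - 1 := by simp only [rphi, if_pos hM]
        rw [hpm] at hjm
        have e_m := h.ent_phi_lo hm1 hM
        have hlasti := hlast (j - v.length + 1) (by omega) (by omega)
        rw [e_j, e_m]
        omega
      · have hpm : rphi u v m = m - u.length := by simp only [rphi, if_neg hM]
        rw [hpm] at hjm
        have e_m := h.ent_phi_hi (by omega) hlt
        have hmaxi := hmax (j - v.length + 1) (by omega)
        rw [e_j, e_m]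
        omega

end Hyp


lemma zipWith_congr'' {α β γ : Type*} (f g : α → β → γ) :
    ∀ (l₁ : List α) (l₂ : List β), (∀ a ∈ l₁, ∀ b ∈ l₂, f a b = g a b) →
      List.zipWith f l₁ l₂ = List.zipWith g l₁ l₂ := by
  intro l₁
  induction l₁ with
  | nil => intro l₂ _; simp
  | cons a t ih =>
    intro l₂ hc
    cases l₂ with
    | nil => simp
    | cons b t₂ =>
      simp only [List.zipWith_cons_cons]
      rw [hc a (by simp) b (by simp),
        ih t₂ (fun a' ha' b' hb' => hc a' (by simp [ha']) b' (by simp [hb']))]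

lemma mem_segStarts {l : List ℕ} {i : ℕ} :
    i ∈ segStarts l ↔ i < l.length ∧ ent l i = 0 := by
  unfold segStarts
  simp [List.mem_filter, List.mem_range]

lemma riseTouch_congr {l : List ℕ} {S S' : Finset ℕ} (hs : riseSet l S = riseSet l S') :
    riseTouch l S = riseTouch l S' := by
  unfold riseTouch
  rw [hs]

lemma zipWith_seg_split (f : ℕ → ℕ → ℕ) (F T : List ℕ) (b0 L : ℕ) (hF : F ≠ []) :
    List.zipWith f (F ++ b0 :: T) ((F ++ b0 :: T).drop 1 ++ [L])
      = List.zipWith f F (F.drop 1 ++ [b0]) ++ List.zipWith f (b0 :: T) (T ++ [L]) := by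
  have hFl := List.length_pos_iff.mpr hF
  rw [List.drop_append_of_le_length (by omega)]
  rw [show (F.drop 1 ++ b0 :: T) ++ [L] = (F.drop 1 ++ [b0]) ++ (T ++ [L]) by simp]
  rw [List.zipWith_append (by simp [List.length_drop]; omega)]

lemma seg_starts (x y : List ℕ) (hxne : x ≠ []) (hx0 : ent x 0 = 0) :
    segStarts (x ++ y) = segStarts x ++ (segStarts y).map (x.length + ·) := by
  unfold segStarts
  rw [List.length_append, List.range_add, List.filter_append]
  congr 1
  · apply List.filter_congr
    intro i hi
    rw [List.mem_range] at hi
    rw [ent_append_left _ _ _ hi]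
  · rw [List.filter_map]
    congr 1
    apply List.filter_congr
    intro j hj
    simp only [Function.comp]
    rw [ent_append_right]

lemma rise_left (x y : List ℕ) (hy : y = [] ∨ ent y 0 = 0) (i : ℕ) (hi : i < x.length) :
    IsRise (x ++ y) i ↔ IsRise x i := by
  unfold IsRise
  rw [List.length_append]
  constructor
  · rintro ⟨h1, h2⟩
    by_cases hix : i + 1 < x.length
    · exact ⟨hix, by rwa [ent_append_left _ _ _ hix, ent_append_left _ _ _ hi] at h2⟩
    · exfalso
      have he : i + 1 = x.length := by omega
      rcases hy with rfl | hy0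
      · simp at h1; omega
      · rw [ent_append_left _ _ _ hi] at h2
        rw [he, show x.length = x.length + 0 by ring, ent_append_right] at h2
        omega
  · rintro ⟨h1, h2⟩
    exact ⟨by omega, by rwa [ent_append_left _ _ _ h1, ent_append_left _ _ _ hi]⟩

lemma rise_right (x y : List ℕ) (j : ℕ) (hj : j < y.length) :
    IsRise (x ++ y) (x.length + j) ↔ IsRise y j := by
  unfold IsRise
  rw [List.length_append]
  have e1 : ent (x++y) (x.length + j) = ent y j := ent_append_right x y j
  constructor
  · rintro ⟨h1, h2⟩
    have hjy : j + 1 < y.length := by omega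
    rw [show x.length + j + 1 = x.length + (j+1) by ring, ent_append_right, e1] at h2
    exact ⟨hjy, h2⟩
  · rintro ⟨h1, h2⟩
    refine ⟨by omega, ?_⟩
    rw [show x.length + j + 1 = x.length + (j+1) by ring, ent_append_right, e1]
    exact h2

lemma seg_riseSet (x y : List ℕ) (S : Finset ℕ) (hy : y = [] ∨ ent y 0 = 0) :
    riseSet (x ++ y) S =
      riseSet x (S.filter (· < x.length)) ∪
        (riseSet y ((S.filter (fun i => x.length ≤ i)).image (fun i => i - x.length))).image
          (fun j => x.length + j) := by
  ext i
  simp only [mem_riseSet, Finset.mem_union, Finset.mem_filter, Finset.mem_image]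
  constructor
  · rintro ⟨hiS, hir⟩
    by_cases hix : i < x.length
    · exact Or.inl ⟨⟨hiS, hix⟩, (rise_left x y hy i hix).mp hir⟩
    · have hi1 : i + 1 < x.length + y.length := by
        have := hir.1; rwa [List.length_append] at this
      have hrr := (rise_right x y (i - x.length) (by omega)).mp
        (by rw [show x.length + (i - x.length) = i by omega]; exact hir)
      exact Or.inr ⟨i - x.length, ⟨⟨i, ⟨hiS, by omega⟩, rfl⟩, hrr⟩, by omega⟩
  · rintro (⟨⟨hiS, hix⟩, hir⟩ | ⟨j, ⟨⟨i', ⟨hi'S, hi'x⟩, rfl⟩, hjr⟩, rfl⟩)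
    · exact ⟨hiS, (rise_left x y hy i hix).mpr hir⟩
    · have hjy : i' - x.length < y.length := by have := hjr.1; omega
      refine ⟨by rw [show x.length + (i' - x.length) = i' by omega]; exact hi'S, ?_⟩
      exact (rise_right x y (i' - x.length) hjy).mpr hjr

lemma seg_riseTouch (x y : List ℕ) (S : Finset ℕ) (hxne : x ≠ []) (hx0 : ent x 0 = 0)
    (hy : y = [] ∨ ent y 0 = 0) :
    riseTouch (x ++ y) S = riseTouch x (S.filter (· < x.length)) ++
      riseTouch y ((S.filter (fun i => x.length ≤ i)).image (fun i => i - x.length)) := by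
  by_cases hyne : y = []
  · subst hyne
    rw [List.append_nil]
    have h2 : riseTouch ([] : List ℕ)
        ((S.filter (fun i => x.length ≤ i)).image (fun i => i - x.length)) = [] := rfl
    rw [h2, List.append_nil]
    apply riseTouch_congr
    ext i
    simp only [mem_riseSet, Finset.mem_filter]
    constructor
    · rintro ⟨hiS, hir⟩; exact ⟨⟨hiS, by have := hir.1; omega⟩, hir⟩
    · rintro ⟨⟨hiS, -⟩, hir⟩; exact ⟨hiS, hir⟩
  · have hy0 : ent y 0 = 0 := hy.resolve_left hyne
    have hyl : 0 < y.length := List.length_pos_iff.mpr hyne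
    have hxl : 0 < x.length := List.length_pos_iff.mpr hxne
    obtain ⟨G0, hG⟩ : ∃ G0, segStarts y = 0 :: G0 := by
      have h1 : segStarts y = (List.range y.length).filter (fun i => ent y i == 0) := rfl
      rw [show y.length = (y.length - 1) + 1 by omega, List.range_succ_eq_map,
        List.filter_cons_of_pos (by simp [hy0])] at h1
      exact ⟨_, h1⟩
    have hFne : segStarts x ≠ [] := by
      intro e
      have h0 : (0:ℕ) ∈ segStarts x := mem_segStarts.mpr ⟨hxl, hx0⟩
      rw [e] at h0
      simp at h0
    have hset : ∀ cur next : ℕ, next ≤ x.length →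
        (riseSet (x++y) S).filter (fun i => cur ≤ i ∧ i < next)
          = (riseSet x (S.filter (· < x.length))).filter (fun i => cur ≤ i ∧ i < next) := by
      intro cur next hnext
      ext i
      simp only [Finset.mem_filter, mem_riseSet]
      constructor
      · rintro ⟨⟨hiS, hir⟩, hc⟩
        exact ⟨⟨⟨hiS, by omega⟩, (rise_left x y hy i (by omega)).mp hir⟩, hc⟩
      · rintro ⟨⟨⟨hiS, hix⟩, hir⟩, hc⟩
        exact ⟨⟨hiS, (rise_left x y hy i hix).mpr hir⟩, hc⟩
    have hset2 : ∀ a b : ℕ,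
        (riseSet (x++y) S).filter (fun i => x.length + a ≤ i ∧ i < x.length + b)
          = ((riseSet y ((S.filter (fun i => x.length ≤ i)).image (fun i => i - x.length))).filter
              (fun i => a ≤ i ∧ i < b)).image (fun j => x.length + j) := by
      intro a b
      ext i
      simp only [Finset.mem_filter, mem_riseSet, Finset.mem_image]
      constructor
      · rintro ⟨⟨hiS, hir⟩, hc1, hc2⟩
        have hi1 : i + 1 < x.length + y.length := by
          have := hir.1; rwa [List.length_append] at this
        have hrr := (rise_right x y (i - x.length) (by omega)).mp
          (by rw [show x.length + (i - x.length) = i by omega]; exact hir)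
        exact ⟨i - x.length, ⟨⟨⟨i, ⟨hiS, by omega⟩, rfl⟩, hrr⟩, by omega, by omega⟩, by omega⟩
      · rintro ⟨j, ⟨⟨⟨i', ⟨hi'S, hi'x⟩, rfl⟩, hjr⟩, hc1, hc2⟩, rfl⟩
        have hjy : i' - x.length < y.length := by have := hjr.1; omega
        refine ⟨⟨by rw [show x.length + (i' - x.length) = i' by omega]; exact hi'S,
          (rise_right x y (i' - x.length) hjy).mpr hjr⟩, by omega, by omega⟩
    show List.zipWith _ (segStarts (x++y)) ((segStarts (x++y)).drop 1 ++ [(x++y).length]) = _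
    rw [seg_starts x y hxne hx0, hG, List.length_append, List.map_cons,
      show x.length + 0 = x.length by ring,
      zipWith_seg_split _ _ _ _ _ hFne]
    congr 1
    · apply zipWith_congr''
      intro cur hcur next hnext
      have hnx : next ≤ x.length := by
        rcases List.mem_append.mp hnext with h1 | h1
        · have := mem_segStarts.mp (List.mem_of_mem_drop h1); omega
        · simp at h1; omega
      show next - cur - _ = next - cur - _
      rw [hset cur next hnx]
    · rw [show riseTouch y ((S.filter (fun i => x.length ≤ i)).image (fun i => i - x.length))
          = List.zipWith (fun cur next => next - cur -
              ((riseSet y ((S.filter (fun i => x.length ≤ i)).image (fun i => i - x.length))).filter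
                (fun i => cur ≤ i ∧ i < next)).card) (0 :: G0) (G0 ++ [y.length]) from by
        unfold riseTouch
        rw [hG]
        rfl]
      rw [show (x.length :: List.map (x.length + ·) G0)
          = List.map (x.length + ·) (0 :: G0) from by simp,
        show List.map (x.length + ·) G0 ++ [x.length + y.length]
          = List.map (x.length + ·) (G0 ++ [y.length]) from by simp]
      rw [List.zipWith_map]
      apply zipWith_congr''
      intro a ha b hb
      show x.length + b - (x.length + a) - _ = b - a - _
      rw [hset2 a b, Finset.card_image_of_injOn (fun p _ q _ e => by omega)]
      omega

lemma segStarts_single (x : List ℕ) (hne : x ≠ []) (h0 : ent x 0 = 0)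
    (hpos : ∀ i, 1 ≤ i → i < x.length → 1 ≤ ent x i) : segStarts x = [0] := by
  have hxl : 0 < x.length := List.length_pos_iff.mpr hne
  show (List.range x.length).filter (fun i => ent x i == 0) = [0]
  rw [show x.length = (x.length - 1) + 1 by omega, List.range_succ_eq_map,
    List.filter_cons_of_pos (by simp [h0])]
  rw [List.filter_eq_nil_iff.mpr ?_]
  intro a ha
  simp only [List.mem_map, List.mem_range] at ha
  obtain ⟨i, hi, rfl⟩ := ha
  have := hpos (i+1) (by omega) (by omega)
  simp only [Nat.succ_eq_add_one, beq_iff_eq]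
  omega

lemma riseSet_lt_len {l : List ℕ} {S : Finset ℕ} {i : ℕ} (hi : i ∈ riseSet l S) :
    i + 1 < l.length := (mem_riseSet.mp hi).2.1

lemma riseTouch_single (x : List ℕ) (T : Finset ℕ) (hne : x ≠ []) (h0 : ent x 0 = 0)
    (hpos : ∀ i, 1 ≤ i → i < x.length → 1 ≤ ent x i) :
    riseTouch x T = [x.length - (riseSet x T).card] := by
  unfold riseTouch
  rw [segStarts_single x hne h0 hpos]
  show [x.length - 0 - ((riseSet x T).filter (fun i => 0 ≤ i ∧ i < x.length)).card] = _
  rw [Finset.filter_true_of_mem (fun i hi => ⟨Nat.zero_le i, by have := riseSet_lt_len hi; omega⟩)]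
  rw [Nat.sub_zero]

lemma card_riseSet_le (x : List ℕ) (T : Finset ℕ) :
    (riseSet x T).card ≤ x.length - 1 := by
  by_cases hne : x = []
  · subst hne
    rw [show riseSet ([] : List ℕ) T = ∅ from by
      ext i; simp [mem_riseSet, IsRise]]
    simp
  · have hxl : 0 < x.length := List.length_pos_iff.mpr hne
    have hsub : riseSet x T ⊆ Finset.range (x.length - 1) := by
      intro i hi
      rw [Finset.mem_range]
      have := riseSet_lt_len hi
      omega
    have := Finset.card_le_card hsub
    rwa [Finset.card_range] at this


lemma ent_take {l : List ℕ} {c i : ℕ} (hi : i < c) : ent (l.take c) i = ent l i := by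
  simp [ent, List.getD, List.getElem?_take, hi]

lemma ent_drop (l : List ℕ) (c j : ℕ) : ent (l.drop c) j = ent l (c + j) := by
  simp [ent, List.getD, List.getElem?_drop]

instance cutDec (l : List ℕ) : Decidable (∃ i, 0 < i ∧ i < l.length ∧ ent l i = 0) :=
  decidable_of_iff (∃ i ∈ Finset.range l.length, 0 < i ∧ ent l i = 0)
    (by constructor
        · rintro ⟨i, hi, h1, h2⟩
          exact ⟨i, h1, Finset.mem_range.mp hi, h2⟩
        · rintro ⟨i, h1, h2, h3⟩
          exact ⟨i, Finset.mem_range.mpr h2, h1, h3⟩)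

def cut (l : List ℕ) : ℕ :=
  if h : ∃ i, 0 < i ∧ i < l.length ∧ ent l i = 0 then Nat.find h else l.length

lemma cut_spec (l : List ℕ) (hne : l ≠ []) :
    1 ≤ cut l ∧ cut l ≤ l.length ∧ (∀ i, 1 ≤ i → i < cut l → ¬ ent l i = 0) ∧
      (cut l < l.length → ent l (cut l) = 0) := by
  have hl : 0 < l.length := List.length_pos_iff.mpr hne
  unfold cut
  split
  case isTrue h =>
    have hf := Nat.find_spec h
    refine ⟨by omega, by omega, ?_, fun _ => hf.2.2⟩
    intro i h1 h2 he
    exact Nat.find_min h h2 ⟨by omega, by omega, he⟩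
  case isFalse h =>
    push_neg at h
    refine ⟨by omega, le_rfl, ?_, fun hc => absurd hc (lt_irrefl _)⟩
    intro i h1 h2 he
    exact h i (by omega) (by omega) he

lemma hyp_build (l : List ℕ) (hd : IsDyck l) (hcut2 : 2 ≤ cut l) :
    Hyp (l.take (cut l)) (l.drop (cut l)) := by
  obtain ⟨hc1, hc2, hc3, hc4⟩ := cut_spec l hd.1
  refine ⟨?_, ?_, ?_, ?_, ?_⟩
  · rw [ent_take (by omega)]; exact hd.2.1
  · rw [List.length_take]; omega
  · intro i h1 h2
    rw [List.length_take] at h2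
    rw [ent_take (by omega)]
    have := hc3 i h1 (by omega)
    omega
  · by_cases hc : cut l < l.length
    · right
      rw [show (0:ℕ) = 0 from rfl, ent_drop]
      simpa using hc4 hc
    · left
      apply List.drop_eq_nil_of_le
      omega
  · rw [List.take_append_drop]; exact hd

lemma riseSet_nil (T : Finset ℕ) : riseSet [] T = ∅ := by
  ext i; simp [mem_riseSet, IsRise]

lemma riseTouch_nil (T : Finset ℕ) : riseTouch [] T = [] := rfl

lemma riseTouch_length (l : List ℕ) (T : Finset ℕ) :
    (riseTouch l T).length = (segStarts l).length := by
  unfold riseTouch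
  rw [List.length_zipWith]
  cases hG : segStarts l with
  | nil => simp
  | cons g t => simp [List.length_drop]

lemma seg_riseSet_card (x y : List ℕ) (S : Finset ℕ) (hy : y = [] ∨ ent y 0 = 0) :
    (riseSet (x++y) S).card = (riseSet x (S.filter (· < x.length))).card
      + (riseSet y ((S.filter (fun i => x.length ≤ i)).image (fun i => i - x.length))).card := by
  have hdisj : Disjoint (riseSet x (S.filter (· < x.length)))
      ((riseSet y ((S.filter (fun i => x.length ≤ i)).image (fun i => i - x.length))).image
        (fun j => x.length + j)) := by
    rw [Finset.disjoint_left]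
    intro i hi1 hi2
    have h1 := riseSet_lt_len hi1
    obtain ⟨j, hj, rfl⟩ := Finset.mem_image.mp hi2
    omega
  rw [seg_riseSet x y S hy, Finset.card_union_of_disjoint hdisj,
    Finset.card_image_of_injOn (fun p _ q _ e => by omega)]

lemma riseTouch_pos_sum (n : ℕ) : ∀ (l : List ℕ) (S : Finset ℕ), l.length = n → l ≠ [] →
    ent l 0 = 0 →
    (∀ p ∈ riseTouch l S, 1 ≤ p) ∧ (riseTouch l S).sum + (riseSet l S).card = l.length := by
  induction n using Nat.strong_induction_on with
  | _ n ih =>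
    intro l S hlen hne h0
    obtain ⟨hc1, hc2, hc3, hc4⟩ := cut_spec l hne
    set c := cut l with hc
    set x := l.take c with hxdef
    set y := l.drop c with hydef
    have hxy : x ++ y = l := List.take_append_drop c l
    have hxlen : x.length = c := by rw [hxdef, List.length_take]; omega
    have hx0 : ent x 0 = 0 := by rw [hxdef, ent_take (by omega)]; exact h0
    have hxpos : ∀ i, 1 ≤ i → i < x.length → 1 ≤ ent x i := by
      intro i h1 h2
      rw [hxdef, ent_take (by rw [hxlen] at h2; omega)]
      have := hc3 i h1 (by rw [hxlen] at h2; omega)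
      omega
    have hxne : x ≠ [] := by
      intro e
      rw [e] at hxlen
      simp at hxlen
      omega
    have hyy : y = [] ∨ ent y 0 = 0 := by
      by_cases hcl : c < l.length
      · right
        rw [hydef, show (0:ℕ) = 0 from rfl, ent_drop]
        simpa using hc4 hcl
      · left
        rw [hydef]
        apply List.drop_eq_nil_of_le
        omega
    have hseg := seg_riseTouch x y S hxne hx0 hyy
    have hcard := seg_riseSet_card x y S hyy
    rw [hxy] at hseg hcard
    have hsingle := riseTouch_single x (S.filter (· < x.length)) hxne hx0 hxpos
    have hxcard := card_riseSet_le x (S.filter (· < x.length))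
    have hxl1 : 1 ≤ x.length := by rw [hxlen]; omega
    by_cases hcl : y = []
    · have hlx : l.length = x.length := by
        rw [← hxy, hcl, List.append_nil]
      rw [hcl] at hseg
      rw [riseTouch_nil] at hseg
      rw [List.append_nil, hsingle] at hseg
      rw [hcl, riseSet_nil] at hcard
      simp only [Finset.card_empty, add_zero] at hcard
      constructor
      · intro p hp
        rw [hseg] at hp
        simp only [List.mem_singleton] at hp
        omega
      · rw [hseg, hcard, hlx]
        simp only [List.sum_cons, List.sum_nil]
        omega
    · have hy0 : ent y 0 = 0 := hyy.resolve_left hcl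
      have hylen : y.length < n := by
        have : l.length = x.length + y.length := by
          rw [← hxy, List.length_append]
        omega
      have ihy := ih y.length hylen y
        ((S.filter (fun i => x.length ≤ i)).image (fun i => i - x.length)) rfl hcl hy0
      rw [hsingle] at hseg
      constructor
      · intro p hp
        rw [hseg] at hp
        rcases List.mem_append.mp hp with h1 | h1
        · simp only [List.mem_singleton] at h1
          omega
        · exact ihy.1 p h1
      · rw [hseg, List.sum_append]
        have hlx : l.length = x.length + y.length := by
          rw [← hxy, List.length_append]
        simp only [List.sum_cons, List.sum_nil]
        omega

namespace Hyp
variable {u v : List ℕ} (h : Hyp u v)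
include h

lemma lmr_pos : 1 ≤ lastMaxRow (u ++ v) := by
  have hu2 := h.hu2
  obtain ⟨hlt, hmax, hlast⟩ := lastMaxRow_spec h.hd.1
  simp only [List.length_append] at hlt hmax hlast
  have he1 : ent (u++v) 1 = 1 := by
    rw [ent_append_left _ _ _ (by omega)]; exact h.hu1
  by_contra h0
  have hle := hmax 1 (by omega)
  have he0 : ent (u++v) (lastMaxRow (u++v)) = 0 := by
    rw [show lastMaxRow (u++v) = 0 by omega, h.l0]
  omega

end Hyp


lemma forward' (u v : List ℕ) (S : Finset ℕ) (a : ℕ) (β : List ℕ) (h : Hyp u v)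
    (hlmr : lastMaxRow (u ++ v) ∉ S) (hS : ∀ s ∈ S, s < (u ++ v).length) (h0S : 0 ∉ S)
    (ha : 1 ≤ a) (hrt : riseTouch (u ++ v) S = (a+1) :: β) :
    IsDyck (rot u v) ∧ (rot u v).length + 1 = (u ++ v).length ∧
    (∀ s ∈ S.image (rphi u v), s < (rot u v).length) ∧
    lastMaxRow (rot u v) ∉ S.image (rphi u v) ∧
    (peakSet (rot u v) (S.image (rphi u v))).card = (peakSet (u++v) S).card ∧
    (riseSet (rot u v) (S.image (rphi u v))).card = (riseSet (u++v) S).card ∧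
    (∃ γ : List ℕ, (∀ g ∈ γ, 0 < g) ∧ γ.sum = a ∧
      riseTouch (rot u v) (S.image (rphi u v)) = β ++ γ) ∧
    dinvC (u++v) S = dinvC (rot u v) (S.image (rphi u v)) + β.length ∧
    areaC (u++v) S = areaC (rot u v) (S.image (rphi u v)) + a ∧
    ((Finset.range v.length).filter (fun j => ent v j = 0)).card = β.length := by
  have hu2 := h.hu2
  have huneq : u ≠ [] := by intro e; rw [e] at hu2; simp at hu2
  have hS' : ∀ s ∈ S, 1 ≤ s ∧ s < u.length + v.length := by
    intro s hs
    have h1 := hS s hs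
    rw [List.length_append] at h1
    have : s ≠ 0 := fun e => h0S (e ▸ hs)
    omega
  have hsplit := seg_riseTouch u v S huneq h.hu0 h.hv0
  rw [riseTouch_single u _ huneq h.hu0 h.hupos] at hsplit
  set cx := (riseSet u (S.filter (· < u.length))).card with hcx
  have hxcard : cx ≤ u.length - 1 := by rw [hcx]; exact card_riseSet_le _ _
  rw [hsplit, List.singleton_append] at hrt
  obtain ⟨hhead, htail⟩ := List.cons_eq_cons.mp hrt
  have hcardL := seg_riseSet_card u v S h.hv0
  have hrs := h.riseSet_rot S hS'
  have hps := h.peakSet_rot S hS'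
  have hpeaks : (peakSet (rot u v) (S.image (rphi u v))).card = (peakSet (u++v) S).card := by
    rw [hps]
    exact h.card_image_phi _ (fun s hs => hS' s (mem_peakSet.mp hs).1)
  have hrises : (riseSet (rot u v) (S.image (rphi u v))).card = (riseSet (u++v) S).card := by
    rw [hrs]
    exact h.card_image_phi _ (fun s hs => hS' s (mem_riseSet.mp hs).1)
  have hvd' : lastMaxRow (rot u v) ∉ S.image (rphi u v) := by
    rw [h.lmr_rot]
    intro hmem
    obtain ⟨t, ht, he⟩ := Finset.mem_image.mp hmem
    have hlm1 := h.lmr_pos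
    have hlm2 : lastMaxRow (u++v) < u.length + v.length := by
      have := (lastMaxRow_spec h.hd.1).1
      rwa [List.length_append] at this
    have heq := h.phi_inj (hS' t ht).1 (hS' t ht).2 hlm1 hlm2 he
    rw [heq] at ht
    exact hlmr ht
  have hwlen : (u.tail.map (· - 1)).length = u.length - 1 := by simp [List.length_tail]
  have hwne : (u.tail.map (· - 1)) ≠ [] := by
    intro e
    rw [e] at hwlen
    simp at hwlen
    omega
  have hw0 : ent (u.tail.map (· - 1)) 0 = 0 := by
    rw [ent_tail_map u 0 (by omega), show (0:ℕ)+1 = 1 from rfl, h.hu1]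
  have hγ : ∃ γ : List ℕ, (∀ g ∈ γ, 0 < g) ∧ γ.sum = a ∧
      riseTouch (rot u v) (S.image (rphi u v)) = β ++ γ := by
    by_cases hv : v = []
    · have hβnil : β = [] := by rw [← htail, hv]; rfl
      have hps2 := riseTouch_pos_sum (rot u v).length (rot u v) (S.image (rphi u v)) rfl
        h.rot_ne h.rot0
      refine ⟨riseTouch (rot u v) (S.image (rphi u v)), hps2.1, ?_,
        by rw [hβnil, List.nil_append]⟩
      have hvl : v.length = 0 := by rw [hv]; rfl
      have hvnil : riseSet v ((S.filter (fun i => u.length ≤ i)).image (fun i => i - u.length))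
          = ∅ := by rw [hv]; exact riseSet_nil _
      rw [hvnil] at hcardL
      simp only [Finset.card_empty, add_zero] at hcardL
      have hrl := h.rot_len
      have hsum := hps2.2
      omega
    · have hv0 : ent v 0 = 0 := h.hv0.resolve_left hv
      have hsplit2 := seg_riseTouch v (u.tail.map (· - 1)) (S.image (rphi u v)) hv hv0
        (Or.inr hw0)
      have hroteq : rot u v = v ++ u.tail.map (· - 1) := rfl
      rw [← hroteq] at hsplit2
      have hSv : (S.image (rphi u v)).filter (· < v.length)
          = (S.filter (fun i => u.length ≤ i)).image (fun i => i - u.length) := by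
        ext j
        simp only [Finset.mem_filter, Finset.mem_image]
        constructor
        · rintro ⟨⟨s, hs, rfl⟩, hlt⟩
          have hs1 := (hS' s hs).1
          have huls : u.length ≤ s := by
            by_contra hc
            rw [show rphi u v s = s + v.length - 1 from by
              simp only [rphi, if_pos (show s < u.length by omega)]] at hlt
            omega
          exact ⟨s, ⟨hs, huls⟩, by simp only [rphi, if_neg (show ¬ s < u.length by omega)]⟩
        · rintro ⟨s, ⟨hs, huls⟩, rfl⟩
          have hs2 := (hS' s hs).2
          have hphi : rphi u v s = s - u.length := by
            simp only [rphi, if_neg (show ¬ s < u.length by omega)]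
          exact ⟨⟨s, hs, hphi⟩, by omega⟩
      rw [hSv, htail] at hsplit2
      have hps2 := riseTouch_pos_sum (u.tail.map (· - 1)).length (u.tail.map (· - 1))
        (((S.image (rphi u v)).filter (fun i => v.length ≤ i)).image (fun i => i - v.length))
        rfl hwne hw0
      refine ⟨_, hps2.1, ?_, hsplit2⟩
      have hc2 := seg_riseSet_card v (u.tail.map (· - 1)) (S.image (rphi u v)) (Or.inr hw0)
      rw [← hroteq] at hc2
      rw [show ((S.image (rphi u v)).filter (· < v.length))
          = ((S.image (rphi u v)).filter (fun i => i < v.length)) from rfl] at hSv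
      rw [hSv] at hc2
      have hsum := hps2.2
      rw [hwlen] at hsum
      omega
  have hZ : ((Finset.range v.length).filter (fun j => ent v j = 0)).card = β.length := by
    rw [← htail, riseTouch_length, segStarts_length]
  have hdinv := h.dinvC_rot S hS'
  rw [hZ] at hdinv
  have harea := h.areaC_rot S hS'
  have hfil : (riseSet (u++v) S).filter (fun i => i < u.length)
      = riseSet u (S.filter (· < u.length)) := by
    rw [seg_riseSet u v S h.hv0, Finset.filter_union,
      Finset.filter_true_of_mem (s := riseSet u (S.filter (· < u.length)))
        (fun i hi => by have := riseSet_lt_len hi; omega),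
      Finset.filter_false_of_mem
        (s := (riseSet v ((S.filter (fun i => u.length ≤ i)).image (fun i => i - u.length))).image
          (fun j => u.length + j))
        (fun i hi => by
          obtain ⟨j, hj, rfl⟩ := Finset.mem_image.mp hi
          omega), Finset.union_empty]
  rw [hfil, ← hcx, show u.length - 1 - cx = a by omega] at harea
  refine ⟨h.rot_dyck, by rw [h.rot_len, List.length_append]; omega, ?_, hvd', hpeaks,
    hrises, hγ, hdinv, harea, hZ⟩
  intro s hs
  obtain ⟨t, ht, rfl⟩ := Finset.mem_image.mp hs
  rw [h.rot_len]
  exact h.phi_lt (hS' t ht).1 (hS' t ht).2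


lemma eq_cons_of_ent0 {u : List ℕ} (hne : u ≠ []) (h0 : ent u 0 = 0) : u = 0 :: u.tail := by
  cases u with
  | nil => simp at hne
  | cons a t =>
    have ha : a = 0 := by simpa [ent] using h0
    rw [ha]
    rfl

lemma tail_map_cancel {u : List ℕ} (hpos : ∀ i, 1 ≤ i → i < u.length → 1 ≤ ent u i) :
    (u.tail.map (· - 1)).map (· + 1) = u.tail := by
  rw [List.map_map]
  apply List.ext_getElem (by simp)
  intro i h1 h2
  simp only [List.getElem_map, Function.comp]
  have hb : 1 ≤ u.tail[i] := by
    have hlen : i + 1 < u.length := by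
      simp only [List.length_tail] at h2
      omega
    have := hpos (i+1) (by omega) hlen
    rw [ent_eq_getElem _ _ hlen] at this
    rw [List.getElem_tail]
    exact this
  omega

lemma cut_ge_two (l : List ℕ) (S : Finset ℕ) (hd : IsDyck l) {a : ℕ} {β : List ℕ}
    (ha : 1 ≤ a) (hrt : riseTouch l S = (a+1) :: β) : 2 ≤ cut l := by
  have hne := hd.1
  obtain ⟨hc1, hc2, hc3, hc4⟩ := cut_spec l hne
  have hxlen : (l.take (cut l)).length = cut l := by rw [List.length_take]; omega
  have hx0 : ent (l.take (cut l)) 0 = 0 := by rw [ent_take (by omega)]; exact hd.2.1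
  have hxpos : ∀ i, 1 ≤ i → i < (l.take (cut l)).length → 1 ≤ ent (l.take (cut l)) i := by
    intro i hi1 hi2
    rw [hxlen] at hi2
    rw [ent_take (by omega)]
    have := hc3 i hi1 hi2
    omega
  have hxne : l.take (cut l) ≠ [] := by
    intro e
    rw [e] at hxlen
    simp at hxlen
    omega
  have hyy : l.drop (cut l) = [] ∨ ent (l.drop (cut l)) 0 = 0 := by
    by_cases hcl : cut l < l.length
    · right
      rw [show (0:ℕ) = 0 from rfl, ent_drop]
      simpa using hc4 hcl
    · left
      apply List.drop_eq_nil_of_le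
      omega
  have hseg := seg_riseTouch (l.take (cut l)) (l.drop (cut l)) S hxne hx0 hyy
  rw [List.take_append_drop] at hseg
  rw [riseTouch_single _ _ hxne hx0 hxpos, hxlen] at hseg
  have hxcard := card_riseSet_le (l.take (cut l)) (S.filter (· < (l.take (cut l)).length))
  rw [hxlen] at hxcard
  rw [hseg, List.singleton_append] at hrt
  obtain ⟨hhead, -⟩ := List.cons_eq_cons.mp hrt
  omega

lemma cut_eq (u v : List ℕ) (h : Hyp u v) : cut (u ++ v) = u.length := by
  obtain ⟨hc1, hc2, hc3, hc4⟩ := cut_spec (u++v) h.hd.1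
  have hu2 := h.hu2
  have hlen : (u++v).length = u.length + v.length := by simp
  have hle : cut (u ++ v) ≤ u.length := by
    by_contra hc
    by_cases hv : v = []
    · have hvl : v.length = 0 := by rw [hv]; rfl
      omega
    · have hvl : 0 < v.length := List.length_pos_iff.mpr hv
      have hz : ent (u++v) u.length = 0 := by
        rw [show u.length = u.length + 0 by ring, ent_append_right]
        exact h.hv0.resolve_left hv
      exact hc3 u.length (by omega) (by omega) hz
  by_contra hc
  have hlt : cut (u++v) < u.length := by omega
  have hz := hc4 (by omega)
  have := h.lpos (cut (u++v)) (by omega) hlt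
  omega


set_option maxHeartbeats 1000000 in
lemma inv_split (β : List ℕ) : ∀ (l : List ℕ) (S : Finset ℕ) (γ : List ℕ), l ≠ [] →
    ent l 0 = 0 → γ ≠ [] → riseTouch l S = β ++ γ →
    ∃ p, p < l.length ∧ ent l p = 0 ∧
      riseTouch (l.take p) (S.filter (· < p)) = β ∧
      riseTouch (l.drop p) ((S.filter (fun i => p ≤ i)).image (fun i => i - p)) = γ := by
  induction β with
  | nil =>
    intro l S γ hne h0 hγ hrt
    refine ⟨0, List.length_pos_iff.mpr hne, h0, rfl, ?_⟩
    rw [List.drop_zero]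
    rw [List.nil_append] at hrt
    rw [← hrt]
    apply riseTouch_congr
    have he : (S.filter (fun i => 0 ≤ i)).image (fun i => i - 0) = S := by
      rw [Finset.filter_true_of_mem (fun i _ => Nat.zero_le i)]
      ext i
      simp
    rw [he]
  | cons b β' ih =>
    intro l S γ hne h0 hγ hrt
    obtain ⟨hc1, hc2, hc3, hc4⟩ := cut_spec l hne
    have hxlen : (l.take (cut l)).length = cut l := by rw [List.length_take]; omega
    have hx0 : ent (l.take (cut l)) 0 = 0 := by rw [ent_take (by omega)]; exact h0
    have hxpos : ∀ i, 1 ≤ i → i < (l.take (cut l)).length → 1 ≤ ent (l.take (cut l)) i := by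
      intro i hi1 hi2
      rw [hxlen] at hi2
      rw [ent_take (by omega)]
      have := hc3 i hi1 hi2
      omega
    have hxne : l.take (cut l) ≠ [] := by
      intro e
      rw [e] at hxlen
      simp at hxlen
      omega
    have hyy : l.drop (cut l) = [] ∨ ent (l.drop (cut l)) 0 = 0 := by
      by_cases hcl : cut l < l.length
      · right
        rw [show (0:ℕ) = 0 from rfl, ent_drop]
        simpa using hc4 hcl
      · left
        apply List.drop_eq_nil_of_le
        omega
    have hseg := seg_riseTouch (l.take (cut l)) (l.drop (cut l)) S hxne hx0 hyy
    rw [List.take_append_drop] at hseg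
    rw [riseTouch_single _ _ hxne hx0 hxpos, hxlen] at hseg
    rw [hseg, List.singleton_append, List.cons_append] at hrt
    obtain ⟨hb, htl⟩ := List.cons_eq_cons.mp hrt
    have hyne : l.drop (cut l) ≠ [] := by
      intro e
      rw [e, riseTouch_nil] at htl
      have := List.append_eq_nil_iff.mp htl.symm
      exact hγ this.2
    have hy0 : ent (l.drop (cut l)) 0 = 0 := hyy.resolve_left hyne
    obtain ⟨p', hp1, hp2, hp3, hp4⟩ := ih (l.drop (cut l))
      ((S.filter (fun i => cut l ≤ i)).image (fun i => i - cut l)) γ hyne hy0 hγ htl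
    have hylen : (l.drop (cut l)).length = l.length - cut l := by rw [List.length_drop]
    have hclen : cut l < l.length := by
      by_contra hcl
      have : l.drop (cut l) = [] := List.drop_eq_nil_of_le (by omega)
      exact hyne this
    refine ⟨cut l + p', by omega, by rw [← ent_drop]; exact hp2, ?_, ?_⟩
    · -- take part
      rw [List.take_add]
      have hyy' : (l.drop (cut l)).take p' = [] ∨ ent ((l.drop (cut l)).take p') 0 = 0 := by
        by_cases hp0 : p' = 0
        · left; rw [hp0]; rfl
        · right
          rw [ent_take (by omega)]
          exact hy0
      have hseg2 := seg_riseTouch (l.take (cut l)) ((l.drop (cut l)).take p')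
        (S.filter (· < cut l + p')) hxne hx0 hyy'
      rw [hseg2, hxlen]
      have he1 : (S.filter (· < cut l + p')).filter (· < cut l) = S.filter (· < cut l) := by
        ext i
        simp only [Finset.mem_filter]
        constructor
        · rintro ⟨⟨h1, -⟩, h2⟩; exact ⟨h1, h2⟩
        · rintro ⟨h1, h2⟩; exact ⟨⟨h1, by omega⟩, h2⟩
      have he2 : ((S.filter (· < cut l + p')).filter (fun i => cut l ≤ i)).image
            (fun i => i - cut l)
          = (((S.filter (fun i => cut l ≤ i)).image (fun i => i - cut l)).filter (· < p')) := by
        ext j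
        simp only [Finset.mem_filter, Finset.mem_image]
        constructor
        · rintro ⟨s, ⟨⟨hs, hlt⟩, hge⟩, rfl⟩
          exact ⟨⟨s, ⟨hs, hge⟩, rfl⟩, by omega⟩
        · rintro ⟨⟨s, ⟨hs, hge⟩, rfl⟩, hlt⟩
          exact ⟨s, ⟨⟨hs, by omega⟩, hge⟩, rfl⟩
      rw [he1, he2, hp3]
      rw [riseTouch_single _ _ hxne hx0 hxpos, hxlen, hb]
      rfl
    · rw [← List.drop_drop]
      have he3 : (S.filter (fun i => cut l + p' ≤ i)).image (fun i => i - (cut l + p'))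
          = (((S.filter (fun i => cut l ≤ i)).image (fun i => i - cut l)).filter
              (fun i => p' ≤ i)).image (fun i => i - p') := by
        ext j
        simp only [Finset.mem_filter, Finset.mem_image]
        constructor
        · rintro ⟨s, ⟨hs, hge⟩, rfl⟩
          exact ⟨s - cut l, ⟨⟨s, ⟨hs, by omega⟩, rfl⟩, by omega⟩, by omega⟩
        · rintro ⟨t, ⟨⟨s, ⟨hs, hge⟩, rfl⟩, hpt⟩, rfl⟩
          exact ⟨s, ⟨hs, by omega⟩, by omega⟩
      rw [he3]
      exact hp4


set_option maxHeartbeats 1000000 in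
lemma psi_spec (a : ℕ) (β γ : List ℕ) (l' : List ℕ) (S' : Finset ℕ) (p : ℕ)
    (hd : IsDyck l') (hvd : ValidDec l' S')
    (hγsum : γ.sum = a) (ha : 1 ≤ a)
    (hp1 : p < l'.length) (hp2 : ent l' p = 0)
    (hp3 : riseTouch (l'.take p) (S'.filter (· < p)) = β)
    (hp4 : riseTouch (l'.drop p) ((S'.filter (fun i => p ≤ i)).image (fun i => i - p)) = γ) :
    Hyp (0 :: (l'.drop p).map (· + 1)) (l'.take p) ∧
    rot (0 :: (l'.drop p).map (· + 1)) (l'.take p) = l' ∧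
    ((S'.image (rpsi (0 :: (l'.drop p).map (· + 1)) (l'.take p))).image
        (rphi (0 :: (l'.drop p).map (· + 1)) (l'.take p)) = S') ∧
    lastMaxRow ((0 :: (l'.drop p).map (· + 1)) ++ l'.take p)
        ∉ S'.image (rpsi (0 :: (l'.drop p).map (· + 1)) (l'.take p)) ∧
    (∀ s ∈ S'.image (rpsi (0 :: (l'.drop p).map (· + 1)) (l'.take p)),
        s < ((0 :: (l'.drop p).map (· + 1)) ++ l'.take p).length) ∧
    0 ∉ S'.image (rpsi (0 :: (l'.drop p).map (· + 1)) (l'.take p)) ∧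
    riseTouch ((0 :: (l'.drop p).map (· + 1)) ++ l'.take p)
        (S'.image (rpsi (0 :: (l'.drop p).map (· + 1)) (l'.take p))) = (a+1) :: β ∧
    ((0 :: (l'.drop p).map (· + 1)) ++ l'.take p).length = l'.length + 1 := by
  set u := 0 :: (l'.drop p).map (· + 1) with hu
  set v := l'.take p with hv
  have hn' : 0 < l'.length := by omega
  have hwlen : (l'.drop p).length = l'.length - p := by rw [List.length_drop]
  have hulen : u.length = (l'.length - p) + 1 := by rw [hu]; simp [hwlen]
  have hvlen : v.length = p := by rw [hv, List.length_take]; omega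
  have hu0 : ent u 0 = 0 := by rw [hu]; rfl
  have hentu : ∀ i, 1 ≤ i → i < u.length → ent u i = ent l' (p + (i-1)) + 1 := by
    intro i h1 h2
    rw [hu, show i = (i-1)+1 by omega, ent_cons_succ,
      ent_map_add_one _ _ (by rw [hwlen]; omega), ent_drop]
    have he : i - 1 + 1 - 1 = i - 1 := by omega
    rw [he]
  have hupos : ∀ i, 1 ≤ i → i < u.length → 1 ≤ ent u i := by
    intro i h1 h2
    rw [hentu i h1 h2]
    omega
  have hu2 : 2 ≤ u.length := by omega
  have hv0 : v = [] ∨ ent v 0 = 0 := by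
    by_cases hp0 : p = 0
    · left; rw [hv, hp0]; rfl
    · right; rw [hv, ent_take (by omega)]; exact hd.2.1
  have hlapp : (u ++ v).length = u.length + v.length := by simp
  have hdy : IsDyck (u ++ v) := by
    refine ⟨by simp [hu], by rw [ent_append_left _ _ _ (by omega)]; exact hu0, ?_⟩
    intro i hi hi1
    rw [hlapp] at hi1
    by_cases hA : i + 1 < u.length
    · rw [ent_append_left _ _ _ hA, ent_append_left _ _ _ (by omega)]
      by_cases hi0 : i = 0
      · subst hi0
        rw [hu0, hentu 1 le_rfl hA, show p + (1 - 1) = p by omega, hp2]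
      · rw [hentu (i+1) (by omega) hA, hentu i (by omega) (by omega)]
        have hstep := hd.2.2 (p + (i-1)) (by omega) (by omega)
        rw [show p + (i+1-1) = (p + (i-1)) + 1 by omega]
        omega
    · by_cases hB : i + 1 = u.length
      · have hvne : v ≠ [] := by
          intro e
          have : v.length = 0 := by rw [e]; rfl
          omega
        rw [show i + 1 = u.length + 0 by omega, ent_append_right]
        rw [hv0.resolve_left hvne]
        omega
      · have hge : u.length ≤ i := by omega
        rw [ent_append_right' _ _ _ (show u.length ≤ i + 1 by omega),
          ent_append_right' _ _ _ hge]
        rw [hv, ent_take (by omega), ent_take (by omega)]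
        have hstep := hd.2.2 (i - u.length) (by omega) (by omega)
        rw [show i + 1 - u.length = (i - u.length) + 1 by omega]
        exact hstep
  have hyp : Hyp u v := ⟨hu0, hu2, hupos, hv0, hdy⟩
  have hw'' : u.tail.map (· - 1) = l'.drop p := by
    rw [hu]
    show ((l'.drop p).map (· + 1)).map (· - 1) = l'.drop p
    rw [List.map_map]
    apply List.ext_getElem (by simp)
    intro i h1 h2
    simp [Function.comp]
  have hrot : rot u v = l' := by
    rw [rot, hw'', hv, List.take_append_drop]
  have hSbound : ∀ s ∈ S', s < l'.length := hvd.1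
  have hlen1 : u.length + v.length = l'.length + 1 := by omega
  have hphi_psi : ∀ t ∈ S', rphi u v (rpsi u v t) = t := by
    intro t ht
    apply hyp.phi_psi
    have := hSbound t ht
    omega
  have himg : (S'.image (rpsi u v)).image (rphi u v) = S' := by
    ext s
    simp only [Finset.mem_image]
    constructor
    · rintro ⟨j, ⟨t, ht, rfl⟩, rfl⟩
      rw [hphi_psi t ht]
      exact ht
    · intro hs
      exact ⟨rpsi u v s, ⟨s, hs, rfl⟩, hphi_psi s hs⟩
  set T := S'.image (rpsi u v) with hT
  have hTmem : ∀ s ∈ T, 1 ≤ s ∧ s < (u++v).length := by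
    intro s hs
    obtain ⟨t, ht, rfl⟩ := Finset.mem_image.mp hs
    have h1 := hyp.psi_range (j := t) (by have := hSbound t ht; omega)
    rw [hlapp]
    exact h1
  have hlmrT : lastMaxRow (u ++ v) ∉ T := by
    intro hmem
    obtain ⟨t, ht, he⟩ := Finset.mem_image.mp hmem
    have h1 : rphi u v (lastMaxRow (u++v)) = t := by rw [← he, hphi_psi t ht]
    have h2 := hyp.lmr_rot
    rw [hrot] at h2
    exact hvd.2 (by rw [h2, h1]; exact ht)
  have h0T : 0 ∉ T := by
    intro hmem
    obtain ⟨t, ht, he⟩ := Finset.mem_image.mp hmem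
    have := (hyp.psi_range (j := t) (by have := hSbound t ht; omega)).1
    omega
  have hune : u ≠ [] := by rw [hu]; simp
  have hsegT := seg_riseTouch u v T hune hu0 hv0
  have hTv : (T.filter (fun i => u.length ≤ i)).image (fun i => i - u.length)
      = S'.filter (· < p) := by
    ext j
    simp only [Finset.mem_filter, Finset.mem_image, hT]
    constructor
    · rintro ⟨s, ⟨⟨t, ht, rfl⟩, hge⟩, rfl⟩
      have htb := hSbound t ht
      have htp : t < p := by
        by_contra hc
        rw [show rpsi u v t = t - v.length + 1 from by
          simp only [rpsi, if_neg (show ¬ t < v.length by omega)]] at hge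
        omega
      have hpsi : rpsi u v t = t + u.length := by
        simp only [rpsi, if_pos (show t < v.length by omega)]
      rw [hpsi]
      exact ⟨by rw [show t + u.length - u.length = t by omega]; exact ht, by omega⟩
    · rintro ⟨hj, hjp⟩
      refine ⟨rpsi u v j, ⟨⟨j, hj, rfl⟩, ?_⟩, ?_⟩
      · rw [show rpsi u v j = j + u.length from by
          simp only [rpsi, if_pos (show j < v.length by omega)]]
        omega
      · rw [show rpsi u v j = j + u.length from by
          simp only [rpsi, if_pos (show j < v.length by omega)]]
        omega
  have hsingle := riseTouch_single u (T.filter (· < u.length)) hune hu0 hupos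
  rw [hsingle, hTv, hp3] at hsegT
  have hriseu : ∀ j, (IsRise u (j+1) ↔ IsRise (l'.drop p) j) := by
    intro j
    unfold IsRise
    rw [hulen, hwlen]
    by_cases hj : j + 1 < l'.length - p
    · have e1 := hentu (j+1+1) (by omega) (by omega)
      have e2 := hentu (j+1) (by omega) (by omega)
      rw [e1, e2, ent_drop, ent_drop,
        show p + (j+1+1-1) = p + (j+1) by omega, show p + (j+1-1) = p + j by omega]
      omega
    · constructor
      · rintro ⟨h1, -⟩; omega
      · rintro ⟨h1, -⟩; omega
  have hseteq : riseSet u (T.filter (· < u.length))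
      = (riseSet (l'.drop p) ((S'.filter (fun i => p ≤ i)).image (fun i => i - p))).image
          (fun j => j + 1) := by
    ext i
    simp only [mem_riseSet, Finset.mem_filter, Finset.mem_image, hT]
    constructor
    · rintro ⟨⟨⟨t, ht, rfl⟩, hlt⟩, hir⟩
      have htb := hSbound t ht
      have htp : p ≤ t := by
        by_contra hc
        rw [show rpsi u v t = t + u.length from by
          simp only [rpsi, if_pos (show t < v.length by omega)]] at hlt
        omega
      have hpsi : rpsi u v t = t - p + 1 := by
        rw [show rpsi u v t = t - v.length + 1 from by
          simp only [rpsi, if_neg (show ¬ t < v.length by omega)], hvlen]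
      rw [hpsi] at hir ⊢
      exact ⟨t - p, ⟨⟨t, ⟨ht, htp⟩, rfl⟩, (hriseu (t-p)).mp hir⟩, rfl⟩
    · rintro ⟨j, ⟨⟨t, ⟨ht, htp⟩, rfl⟩, hjr⟩, rfl⟩
      have htb := hSbound t ht
      have hjlen : t - p + 1 < l'.length - p := by
        have := hjr.1
        rw [hwlen] at this
        omega
      refine ⟨⟨⟨t, ht, ?_⟩, by omega⟩, (hriseu (t-p)).mpr hjr⟩
      rw [show rpsi u v t = t - v.length + 1 from by
        simp only [rpsi, if_neg (show ¬ t < v.length by omega)], hvlen]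
  have hcardu : (riseSet u (T.filter (· < u.length))).card
      = (riseSet (l'.drop p) ((S'.filter (fun i => p ≤ i)).image (fun i => i - p))).card := by
    rw [hseteq]
    exact Finset.card_image_of_injOn (fun x _ y _ e => by omega)
  have hdropne : l'.drop p ≠ [] := by
    intro e
    have := congrArg List.length e
    rw [hwlen] at this
    simp at this
    omega
  have hdrop0 : ent (l'.drop p) 0 = 0 := by
    rw [show (0:ℕ) = 0 from rfl, ent_drop]
    simpa using hp2
  have hps4 := riseTouch_pos_sum (l'.drop p).length (l'.drop p)
    ((S'.filter (fun i => p ≤ i)).image (fun i => i - p)) rfl hdropne hdrop0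
  have hsum := hps4.2
  rw [hp4, hwlen] at hsum
  have hhead : u.length - (riseSet u (T.filter (· < u.length))).card = a + 1 := by
    rw [hcardu]
    omega
  rw [hhead] at hsegT
  exact ⟨hyp, hrot, himg, hlmrT, fun s hs => (hTmem s hs).2, h0T, by rw [hsegT]; rfl,
    by rw [hlapp]; omega⟩


lemma mem_decPaths {n : ℕ} {p : List ℕ × Finset ℕ} :
    p ∈ decPaths n ↔ p.1 ∈ allSeqs n ∧ p.2 ⊆ Finset.range n ∧ IsDyck p.1 ∧ ValidDec p.1 p.2 := by
  unfold decPaths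
  simp only [Finset.mem_filter, Finset.mem_product, Finset.mem_powerset]
  tauto

lemma inj_aux (u1 v1 u2 v2 : List ℕ) (S1 S2 : Finset ℕ) (h1 : Hyp u1 v1) (h2 : Hyp u2 v2)
    (hS1 : ∀ s ∈ S1, 1 ≤ s ∧ s < u1.length + v1.length)
    (hS2 : ∀ s ∈ S2, 1 ≤ s ∧ s < u2.length + v2.length)
    (hZ : ((Finset.range v1.length).filter (fun j => ent v1 j = 0)).card
        = ((Finset.range v2.length).filter (fun j => ent v2 j = 0)).card)
    (hrot : rot u1 v1 = rot u2 v2)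
    (hSim : S1.image (rphi u1 v1) = S2.image (rphi u2 v2)) :
    u1 ++ v1 = u2 ++ v2 ∧ S1 = S2 := by
  have key : ∀ t₁ t₂ : ℕ, t₁ < t₂ → ent (rot u1 v1) t₁ = 0 →
      ((Finset.range t₁).filter (fun j => ent (rot u1 v1) j = 0)).card
        ≠ ((Finset.range t₂).filter (fun j => ent (rot u1 v1) j = 0)).card := by
    intro t₁ t₂ hlt hz he
    have hsub : insert t₁ ((Finset.range t₁).filter (fun j => ent (rot u1 v1) j = 0))
        ⊆ (Finset.range t₂).filter (fun j => ent (rot u1 v1) j = 0) := by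
      intro j hj
      rcases Finset.mem_insert.mp hj with rfl | hj
      · exact Finset.mem_filter.mpr ⟨Finset.mem_range.mpr hlt, hz⟩
      · obtain ⟨hj1, hj2⟩ := Finset.mem_filter.mp hj
        exact Finset.mem_filter.mpr
          ⟨Finset.mem_range.mpr (by have := Finset.mem_range.mp hj1; omega), hj2⟩
    have hcard := Finset.card_le_card hsub
    rw [Finset.card_insert_of_notMem (by simp)] at hcard
    omega
  have hz1 : ∀ j < v1.length, ent (rot u1 v1) j = ent v1 j := by
    intro j hj
    rw [rot, ent_append_left _ _ _ hj]
  have hz2 : ∀ j < v2.length, ent (rot u2 v2) j = ent v2 j := by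
    intro j hj
    rw [rot, ent_append_left _ _ _ hj]
  have hc1 : ((Finset.range v1.length).filter (fun j => ent (rot u1 v1) j = 0)).card
      = ((Finset.range v1.length).filter (fun j => ent v1 j = 0)).card := by
    congr 1
    apply Finset.filter_congr
    intro j hj
    rw [hz1 j (Finset.mem_range.mp hj)]
  have hc2 : ((Finset.range v2.length).filter (fun j => ent (rot u1 v1) j = 0)).card
      = ((Finset.range v2.length).filter (fun j => ent v2 j = 0)).card := by
    congr 1
    apply Finset.filter_congr
    intro j hj
    rw [hrot, hz2 j (Finset.mem_range.mp hj)]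
  have hzero1 : ent (rot u1 v1) v1.length = 0 := by
    have hh := ent_append_right v1 (u1.tail.map (· - 1)) 0
    rw [Nat.add_zero] at hh
    rw [rot, hh, ent_tail_map _ _ (by have := h1.hu2; omega)]
    norm_num [h1.hu1]
  have hzero2 : ent (rot u1 v1) v2.length = 0 := by
    have hh := ent_append_right v2 (u2.tail.map (· - 1)) 0
    rw [Nat.add_zero] at hh
    rw [hrot, rot, hh, ent_tail_map _ _ (by have := h2.hu2; omega)]
    norm_num [h2.hu1]
  have hveq : v1.length = v2.length := by
    rcases lt_trichotomy v1.length v2.length with hlt | heq | hlt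
    · exact absurd (by rw [hc1, hZ, ← hc2]) (key v1.length v2.length hlt hzero1)
    · exact heq
    · exact absurd (by rw [hc2, ← hZ, ← hc1]) (key v2.length v1.length hlt hzero2)
  have hv12 : v1 = v2 := by
    have e1 : v1 = (rot u1 v1).take v1.length := by rw [rot, List.take_left]
    have e2 : v2 = (rot u2 v2).take v2.length := by rw [rot, List.take_left]
    rw [e1, e2, hrot, hveq]
  have hw12 : u1.tail.map (· - 1) = u2.tail.map (· - 1) := by
    have e1 : u1.tail.map (· - 1) = (rot u1 v1).drop v1.length := by
      rw [rot, List.drop_left]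
    have e2 : u2.tail.map (· - 1) = (rot u2 v2).drop v2.length := by
      rw [rot, List.drop_left]
    rw [e1, e2, hrot, hveq]
  have hu12 : u1 = u2 := by
    have hne1 : u1 ≠ [] := by
      intro e; have := h1.hu2; rw [e] at this; simp at this
    have hne2 : u2 ≠ [] := by
      intro e; have := h2.hu2; rw [e] at this; simp at this
    rw [eq_cons_of_ent0 hne1 h1.hu0, eq_cons_of_ent0 hne2 h2.hu0]
    rw [← tail_map_cancel h1.hupos, ← tail_map_cancel h2.hupos, hw12]
  subst hu12
  subst hv12
  refine ⟨rfl, ?_⟩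
  ext s
  constructor
  · intro hs
    have hmem : rphi u1 v1 s ∈ S2.image (rphi u1 v1) := by
      rw [← hSim]; exact Finset.mem_image_of_mem _ hs
    obtain ⟨t, ht, hte⟩ := Finset.mem_image.mp hmem
    have := h1.phi_inj (hS2 t ht).1 (hS2 t ht).2 (hS1 s hs).1 (hS1 s hs).2 hte
    rw [← this]; exact ht
  · intro hs
    have hmem : rphi u1 v1 s ∈ S1.image (rphi u1 v1) := by
      rw [hSim]; exact Finset.mem_image_of_mem _ hs
    obtain ⟨t, ht, hte⟩ := Finset.mem_image.mp hmem
    have := h1.phi_inj (hS1 t ht).1 (hS1 t ht).2 (hS2 s hs).1 (hS2 s hs).2 hte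
    rw [← this]; exact ht

lemma main_step (a k ℓ n : ℕ) (ha : 1 ≤ a) (β : List ℕ) (l : List ℕ) (S : Finset ℕ)
    (hmem : (l, S) ∈ decPaths n) (hrt : riseTouch l S = (a + 1) :: β) (h0S : 0 ∉ S)
    (hpk : (peakSet l S).card = k) (hrs : (riseSet l S).card = ℓ) :
    ((rot (l.take (cut l)) (l.drop (cut l)),
        S.image (rphi (l.take (cut l)) (l.drop (cut l)))) ∈ decPaths (n-1) ∧
      (peakSet (rot (l.take (cut l)) (l.drop (cut l)))
        (S.image (rphi (l.take (cut l)) (l.drop (cut l))))).card = k ∧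
      (riseSet (rot (l.take (cut l)) (l.drop (cut l)))
        (S.image (rphi (l.take (cut l)) (l.drop (cut l))))).card = ℓ ∧
      (∃ γ : List ℕ, (∀ x ∈ γ, 0 < x) ∧ γ.sum = a ∧
        riseTouch (rot (l.take (cut l)) (l.drop (cut l)))
          (S.image (rphi (l.take (cut l)) (l.drop (cut l)))) = β ++ γ)) ∧
    dinvC l S = dinvC (rot (l.take (cut l)) (l.drop (cut l)))
        (S.image (rphi (l.take (cut l)) (l.drop (cut l)))) + β.length ∧
    areaC l S = areaC (rot (l.take (cut l)) (l.drop (cut l)))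
        (S.image (rphi (l.take (cut l)) (l.drop (cut l)))) + a := by
  obtain ⟨hall, hpow, hdy, hvd⟩ := mem_decPaths.mp hmem
  have hlen : l.length = n := length_of_mem_allSeqs hall
  have hcut2 : 2 ≤ cut l := cut_ge_two l S hdy ha hrt
  have hyp := hyp_build l hdy hcut2
  have hl : l.take (cut l) ++ l.drop (cut l) = l := List.take_append_drop _ _
  have hvd1 : lastMaxRow (l.take (cut l) ++ l.drop (cut l)) ∉ S := by rw [hl]; exact hvd.2
  have hS1 : ∀ s ∈ S, s < (l.take (cut l) ++ l.drop (cut l)).length := by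
    rw [hl]; exact hvd.1
  have hrt1 : riseTouch (l.take (cut l) ++ l.drop (cut l)) S = (a+1) :: β := by
    rw [hl]; exact hrt
  obtain ⟨f1, f2, f3, f4, f5, f6, f7, f8, f9, f10⟩ :=
    forward' _ _ S a β hyp hvd1 hS1 h0S ha hrt1
  rw [hl] at f2 f5 f6 f8 f9
  have hn1 : 1 ≤ n := by omega
  have hrotlen : (rot (l.take (cut l)) (l.drop (cut l))).length = n - 1 := by omega
  refine ⟨⟨mem_decPaths.mpr ⟨mem_allSeqs_of_dyck f1 hrotlen, ?_, f1, f3, f4⟩,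
    by rw [f5, hpk], by rw [f6, hrs], f7⟩, f8, f9⟩
  intro s hs
  rw [Finset.mem_range, ← hrotlen]
  exact f3 s hs

/-- Case 1 of Proposition 3.1: cyclic rotation is a bijection between ∘-decorated Dyck
paths of size `n = a + 1 + |β| + ℓ` with rise-touch composition `(a+1, β)`, `k` decorated
peaks, `ℓ` decorated double rises and undecorated first row, and ∘-decorated Dyck paths
of size `n - 1` with `k` decorated peaks, `ℓ` decorated double rises and rise-touch
composition `(β, γ)` for some `γ ⊨ a`; it shifts `dinv_∘` by `ℓ(β)` and `area_∘` by `a`. -/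
theorem rotation_bijection_undecorated_first_step
    (a k ℓ n : ℕ) (ha : 1 ≤ a) (β : List ℕ) (hβ : ∀ x ∈ β, 0 < x)
    (hn : n = a + 1 + β.sum + ℓ) :
    ∃ Φ : {p : List ℕ × Finset ℕ // p ∈ decPaths n ∧
            riseTouch p.1 p.2 = (a + 1) :: β ∧ (peakSet p.1 p.2).card = k ∧
            (riseSet p.1 p.2).card = ℓ ∧ 0 ∉ p.2} →
          {p : List ℕ × Finset ℕ // p ∈ decPaths (n - 1) ∧
            (peakSet p.1 p.2).card = k ∧ (riseSet p.1 p.2).card = ℓ ∧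
            ∃ γ : List ℕ, (∀ x ∈ γ, 0 < x) ∧ γ.sum = a ∧
              riseTouch p.1 p.2 = β ++ γ},
      Function.Bijective Φ ∧
        ∀ p, dinvC p.1.1 p.1.2 = dinvC (Φ p).1.1 (Φ p).1.2 + β.length ∧
             areaC p.1.1 p.1.2 = areaC (Φ p).1.1 (Φ p).1.2 + a := by
  classical
  refine ⟨fun q => ⟨(rot (q.1.1.take (cut q.1.1)) (q.1.1.drop (cut q.1.1)),
      q.1.2.image (rphi (q.1.1.take (cut q.1.1)) (q.1.1.drop (cut q.1.1)))),
      (main_step a k ℓ n ha β q.1.1 q.1.2 q.2.1 q.2.2.1 q.2.2.2.2.2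
        q.2.2.2.1 q.2.2.2.2.1).1⟩, ⟨?_, ?_⟩, ?_⟩
  · -- injectivity
    intro q₁ q₂ he
    obtain ⟨hmem₁, hrt₁, hpk₁, hrs₁, h0S₁⟩ := q₁.2
    obtain ⟨hmem₂, hrt₂, hpk₂, hrs₂, h0S₂⟩ := q₂.2
    obtain ⟨hall₁, hpow₁, hdy₁, hvd₁⟩ := mem_decPaths.mp hmem₁
    obtain ⟨hall₂, hpow₂, hdy₂, hvd₂⟩ := mem_decPaths.mp hmem₂
    have hyp₁ := hyp_build q₁.1.1 hdy₁ (cut_ge_two _ q₁.1.2 hdy₁ ha hrt₁)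
    have hyp₂ := hyp_build q₂.1.1 hdy₂ (cut_ge_two _ q₂.1.2 hdy₂ ha hrt₂)
    have hl₁ : q₁.1.1.take (cut q₁.1.1) ++ q₁.1.1.drop (cut q₁.1.1) = q₁.1.1 :=
      List.take_append_drop _ _
    have hl₂ : q₂.1.1.take (cut q₂.1.1) ++ q₂.1.1.drop (cut q₂.1.1) = q₂.1.1 :=
      List.take_append_drop _ _
    have hval := congrArg Subtype.val he
    have hv1 : rot (q₁.1.1.take (cut q₁.1.1)) (q₁.1.1.drop (cut q₁.1.1))
        = rot (q₂.1.1.take (cut q₂.1.1)) (q₂.1.1.drop (cut q₂.1.1)) :=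
      congrArg Prod.fst hval
    have hv2 : q₁.1.2.image (rphi (q₁.1.1.take (cut q₁.1.1)) (q₁.1.1.drop (cut q₁.1.1)))
        = q₂.1.2.image (rphi (q₂.1.1.take (cut q₂.1.1)) (q₂.1.1.drop (cut q₂.1.1))) :=
      congrArg Prod.snd hval
    have hS'₁ : ∀ s ∈ q₁.1.2, 1 ≤ s ∧
        s < (q₁.1.1.take (cut q₁.1.1)).length + (q₁.1.1.drop (cut q₁.1.1)).length := by
      intro s hs
      have hb := hvd₁.1 s hs
      have h0 : s ≠ 0 := fun e => h0S₁ (e ▸ hs)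
      have hll : (q₁.1.1.take (cut q₁.1.1)).length + (q₁.1.1.drop (cut q₁.1.1)).length
          = q₁.1.1.length := by rw [← List.length_append, hl₁]
      omega
    have hS'₂ : ∀ s ∈ q₂.1.2, 1 ≤ s ∧
        s < (q₂.1.1.take (cut q₂.1.1)).length + (q₂.1.1.drop (cut q₂.1.1)).length := by
      intro s hs
      have hb := hvd₂.1 s hs
      have h0 : s ≠ 0 := fun e => h0S₂ (e ▸ hs)
      have hll : (q₂.1.1.take (cut q₂.1.1)).length + (q₂.1.1.drop (cut q₂.1.1)).length
          = q₂.1.1.length := by rw [← List.length_append, hl₂]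
      omega
    obtain ⟨-, -, -, -, -, -, -, -, -, g10₁⟩ := forward' _ _ q₁.1.2 a β hyp₁
      (by rw [hl₁]; exact hvd₁.2) (by rw [hl₁]; exact hvd₁.1) h0S₁ ha
      (by rw [hl₁]; exact hrt₁)
    obtain ⟨-, -, -, -, -, -, -, -, -, g10₂⟩ := forward' _ _ q₂.1.2 a β hyp₂
      (by rw [hl₂]; exact hvd₂.2) (by rw [hl₂]; exact hvd₂.1) h0S₂ ha
      (by rw [hl₂]; exact hrt₂)
    obtain ⟨heq, hSeq⟩ := inj_aux _ _ _ _ _ _ hyp₁ hyp₂ hS'₁ hS'₂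
      (by rw [g10₁, g10₂]) hv1 hv2
    apply Subtype.ext
    apply Prod.ext
    · rw [← hl₁, ← hl₂, heq]
    · exact hSeq
  · -- surjectivity
    intro b
    obtain ⟨hmemB, hpkB, hrsB, γ, hγpos, hγsum, hrtB⟩ := b.2
    obtain ⟨hallB, hpowB, hdyB, hvdB⟩ := mem_decPaths.mp hmemB
    have hlenB : b.1.1.length = n - 1 := length_of_mem_allSeqs hallB
    have hγne : γ ≠ [] := by
      intro e; rw [e] at hγsum; simp at hγsum; omega
    obtain ⟨p, hp1, hp2, hp3, hp4⟩ := inv_split β b.1.1 b.1.2 γ hdyB.1 hdyB.2.1 hγne hrtB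
    obtain ⟨hyp, hrot, himg, hlmrT, hbound, h0T, hrtT, hlenT⟩ :=
      psi_spec a β γ b.1.1 b.1.2 p hdyB hvdB hγsum ha hp1 hp2 hp3 hp4
    set u := 0 :: (b.1.1.drop p).map (· + 1) with hudef
    set v := b.1.1.take p with hvdef
    set T := b.1.2.image (rpsi u v) with hTdef
    obtain ⟨g1, g2, g3, g4, g5, g6, g7, g8, g9, g10⟩ :=
      forward' u v T a β hyp hlmrT hbound h0T ha hrtT
    rw [hrot, himg] at g5 g6
    have hn2 : 2 ≤ n := by omega
    have hxlen : (u ++ v).length = n := by rw [hlenT, hlenB]; omega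
    have hxmem : ((u ++ v, T)) ∈ decPaths n := mem_decPaths.mpr
      ⟨mem_allSeqs_of_dyck hyp.hd hxlen, fun s hs => Finset.mem_range.mpr (by
          rw [← hxlen]; exact hbound s hs), hyp.hd, hbound, hlmrT⟩
    refine ⟨⟨(u ++ v, T), hxmem, hrtT, by rw [← g5]; exact hpkB,
      by rw [← g6]; exact hrsB, h0T⟩, ?_⟩
    apply Subtype.ext
    show (rot ((u++v).take (cut (u++v))) ((u++v).drop (cut (u++v))),
      T.image (rphi ((u++v).take (cut (u++v))) ((u++v).drop (cut (u++v))))) = b.1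
    rw [cut_eq u v hyp, List.take_left, List.drop_left, hrot, himg]
  · -- statistics
    intro q
    exact ⟨(main_step a k ℓ n ha β q.1.1 q.1.2 q.2.1 q.2.2.1 q.2.2.2.2.2
        q.2.2.2.1 q.2.2.2.2.1).2.1,
      (main_step a k ℓ n ha β q.1.1 q.1.2 q.2.1 q.2.2.1 q.2.2.2.2.2
        q.2.2.2.1 q.2.2.2.2.1).2.2⟩
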